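/- arXiv:2007.11783 — 8 statements merged into one kernel-verified Lean document; each statement's English description precedes it below -/
import Mathlib

section
/- Let n ≥ 2, 1 ≤ b ≤ n, and let ψ_1, …, ψ_n ∈ ℝ^d satisfy Σ_{i=1}^n ψ_i = 0. If I is a subset of {1, …, n} of cardinality b chosen uniformly at random (each of the binom(n, b) such subsets having equal probability), then E‖(1/b) Σ_{i∈I} ψ_i‖² = ((n − b)/(b(n − 1))) · (1/n) Σ_{i=1}^n ‖ψ_i‖². -/
open Finset

-- counting lemma
lemma count_superset {α : Type*} [DecidableEq α] (s t : Finset α) (ht : t ⊆ s) {b : ℕ}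
    (hb : t.card ≤ b) :
    ((Finset.powersetCard b s).filter (fun I => t ⊆ I)).card
      = (s.card - t.card).choose (b - t.card) := by
  rw [← Finset.card_sdiff_of_subset ht, ← Finset.card_powersetCard]
  apply Finset.card_bij (fun I _ => I \ t)
  · intro I hI
    simp only [Finset.mem_filter, Finset.mem_powersetCard] at hI
    rw [Finset.mem_powersetCard]
    exact ⟨Finset.sdiff_subset_sdiff hI.1.1 subset_rfl,
      by rw [Finset.card_sdiff_of_subset hI.2, hI.1.2]⟩
  · intro I₁ h₁ I₂ h₂ h
    simp only [Finset.mem_filter] at h₁ h₂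
    rw [← Finset.sdiff_union_of_subset h₁.2, ← Finset.sdiff_union_of_subset h₂.2, h]
  · intro J hJ
    rw [Finset.mem_powersetCard] at hJ
    have hdisj : Disjoint J t := Finset.disjoint_of_subset_left hJ.1 Finset.sdiff_disjoint
    refine ⟨J ∪ t, ?_, ?_⟩
    · simp only [Finset.mem_filter, Finset.mem_powersetCard]
      refine ⟨⟨Finset.union_subset (hJ.1.trans Finset.sdiff_subset) ht, ?_⟩,
        Finset.subset_union_right⟩
      rw [Finset.card_union_of_disjoint hdisj, hJ.2]
      omega
    · rw [Finset.union_sdiff_right, Finset.sdiff_eq_self_of_disjoint hdisj]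

/-- exact variance identity for uniform sampling without replacement.
The expectation is the average over all `binom(n, b)` subsets `I ⊆ {1, …, n}` with
`|I| = b`, each with equal weight. -/
theorem stmt_1 {d n : ℕ} (hn : 2 ≤ n) (b : ℕ) (hb1 : 1 ≤ b) (hbn : b ≤ n)
    (ψ : Fin n → EuclideanSpace ℝ (Fin d))
    (hsum : ∑ i, ψ i = 0) :
    (∑ I ∈ Finset.powersetCard b (Finset.univ : Finset (Fin n)),
        ‖(b : ℝ)⁻¹ • ∑ i ∈ I, ψ i‖ ^ 2)
      / ((Finset.powersetCard b (Finset.univ : Finset (Fin n))).card : ℝ)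
    = ((n : ℝ) - b) / (b * ((n : ℝ) - 1)) * ((n : ℝ)⁻¹ * ∑ i, ‖ψ i‖ ^ 2) := by
  classical
  set P := Finset.powersetCard b (Finset.univ : Finset (Fin n)) with hP
  set f : Fin n → Fin n → ℝ := fun i j => inner ℝ (ψ i) (ψ j) with hf
  set T : ℝ := ∑ i, ‖ψ i‖ ^ 2 with hT
  set N : Fin n → Fin n → ℕ := fun i j => (P.filter (fun I => i ∈ I ∧ j ∈ I)).card with hN
  -- constants
  set A : ℕ := (n - 1).choose (b - 1) with hA
  have hNdiag : ∀ i : Fin n, N i i = A := by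
    intro i
    have : (P.filter (fun I => i ∈ I ∧ i ∈ I)) = P.filter (fun I => ({i} : Finset (Fin n)) ⊆ I) := by
      apply Finset.filter_congr; intro I _; simp
    simp only [hN]
    rw [this, count_superset _ _ (Finset.subset_univ _) (by simpa using hb1)]
    simp [hA]
  have hNoff : ∀ i j : Fin n, i ≠ j →
      ((N i j : ℝ)) * ((n : ℝ) * ((n:ℝ) - 1)) = (b : ℝ) * ((b:ℝ) - 1) * ((n.choose b : ℕ) : ℝ) := by
    intro i j hij
    have hfilt : (P.filter (fun I => i ∈ I ∧ j ∈ I))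
        = P.filter (fun I => ({i, j} : Finset (Fin n)) ⊆ I) := by
      apply Finset.filter_congr; intro I _; simp [Finset.insert_subset_iff]
    have hcard2 : ({i, j} : Finset (Fin n)).card = 2 := by
      rw [Finset.card_insert_of_notMem (by simpa using hij), Finset.card_singleton]
    rcases Nat.lt_or_ge b 2 with hb2 | hb2
    · interval_cases b
      have : (P.filter (fun I => i ∈ I ∧ j ∈ I)) = ∅ := by
        rw [Finset.eq_empty_iff_forall_notMem]
        intro I hI
        simp only [Finset.mem_filter, hP, Finset.mem_powersetCard] at hI
        have : ({i, j} : Finset (Fin n)) ⊆ I := by simp [Finset.insert_subset_iff, hI.2]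
        have := Finset.card_le_card this
        rw [hcard2, hI.1.2] at this
        omega
      simp only [hN]; simp [this]
    · have := count_superset (Finset.univ : Finset (Fin n)) {i, j} (Finset.subset_univ _)
        (by omega : ({i,j} : Finset (Fin n)).card ≤ b)
      rw [← hfilt] at this
      simp only [hN]
      rw [this, hcard2, Finset.card_univ, Fintype.card_fin]
      -- need : ((n-2).choose (b-2) : ℝ) * (n * (n-1)) = b * (b-1) * choose n b
      obtain ⟨m, rfl⟩ : ∃ m, n = m + 2 := ⟨n - 2, by omega⟩
      obtain ⟨c, rfl⟩ : ∃ c, b = c + 2 := ⟨b - 2, by omega⟩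
      have key : (m + 2) * ((m+1) * (m.choose c)) = ((c+2) * ((c+1) * ((m+2).choose (c+2)))) := by
        have h1 : (m+1) * m.choose c = (m + 1).choose (c + 1) * (c + 1) :=
          Nat.add_one_mul_choose_eq m c
        have h2 : (m+2) * (m+1).choose (c+1) = (m + 2).choose (c + 2) * (c + 2) :=
          Nat.add_one_mul_choose_eq (m+1) (c+1)
        calc (m + 2) * ((m+1) * (m.choose c)) = (m+2) * ((m+1).choose (c+1) * (c+1)) := by rw [h1]
          _ = ((m+2) * (m+1).choose (c+1)) * (c+1) := by ring
          _ = ((m + 2).choose (c + 2) * (c + 2)) * (c+1) := by rw [h2]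
          _ = _ := by ring
      have := congrArg (fun x : ℕ => (x : ℝ)) key
      push_cast at this ⊢
      ring_nf
      ring_nf at this
      linarith
  -- A identity
  have hAeq : ((A : ℝ)) * (n : ℝ) = (b : ℝ) * ((n.choose b : ℕ) : ℝ) := by
    obtain ⟨m, rfl⟩ : ∃ m, n = m + 1 := ⟨n - 1, by omega⟩
    obtain ⟨c, rfl⟩ : ∃ c, b = c + 1 := ⟨b - 1, by omega⟩
    have key : (m+1) * m.choose c = (m + 1).choose (c + 1) * (c + 1) := Nat.add_one_mul_choose_eq m c
    have := congrArg (fun x : ℕ => (x : ℝ)) key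
    push_cast at this
    simp only [hA, Nat.add_sub_cancel]
    push_cast
    linarith
  -- row sums: for each i, ∑ j ≠ i, f i j = -‖ψ i‖^2
  have hrow : ∀ i : Fin n, ∑ j ∈ Finset.univ.erase i, f i j = -‖ψ i‖ ^ 2 := by
    intro i
    have h1 : ∑ j : Fin n, f i j = 0 := by
      rw [hf]
      simp only
      rw [← inner_sum, hsum, inner_zero_right]
    have h2 : ∑ j ∈ Finset.univ.erase i, f i j + f i i = ∑ j : Fin n, f i j :=
      Finset.sum_erase_add _ _ (Finset.mem_univ i)
    have h3 : f i i = ‖ψ i‖ ^ 2 := real_inner_self_eq_norm_sq (ψ i)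
    linarith [h2.trans h1, h3]
  -- main expansion
  have hS : ∑ I ∈ P, ‖∑ i ∈ I, ψ i‖ ^ 2 = ∑ i : Fin n, ∑ j : Fin n, (N i j : ℝ) * f i j := by
    have expand : ∀ I ∈ P, ‖∑ i ∈ I, ψ i‖ ^ 2
        = ∑ i : Fin n, ∑ j : Fin n, if i ∈ I ∧ j ∈ I then f i j else 0 := by
      intro I _
      rw [← real_inner_self_eq_norm_sq, sum_inner]
      calc ∑ i ∈ I, inner ℝ (ψ i) (∑ j ∈ I, ψ j)
          = ∑ i ∈ I, ∑ j ∈ I, f i j := by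
            refine Finset.sum_congr rfl fun i _ => ?_; rw [inner_sum]
        _ = ∑ i : Fin n, if i ∈ I then ∑ j : Fin n, (if j ∈ I then f i j else 0) else 0 := by
            rw [Finset.sum_ite_mem, Finset.univ_inter]
            exact Finset.sum_congr rfl fun i _ => by rw [Finset.sum_ite_mem, Finset.univ_inter]
        _ = _ := by
            refine Finset.sum_congr rfl fun i _ => ?_
            split_ifs with h
            · exact Finset.sum_congr rfl fun j _ => by simp [h]
            · simp [h]
    rw [Finset.sum_congr rfl expand, Finset.sum_comm]
    refine Finset.sum_congr rfl fun i _ => ?_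
    rw [Finset.sum_comm]
    refine Finset.sum_congr rfl fun j _ => ?_
    rw [← Finset.sum_filter, Finset.sum_const, hN, nsmul_eq_mul]
  -- combine
  have hcard : (P.card : ℝ) = ((n.choose b : ℕ) : ℝ) := by
    rw [hP, Finset.card_powersetCard, Finset.card_univ, Fintype.card_fin]
  have hC0 : ((n.choose b : ℕ) : ℝ) ≠ 0 := by
    exact_mod_cast (Nat.choose_pos hbn).ne'
  have hb0 : (b:ℝ) ≠ 0 := Nat.cast_ne_zero.mpr (by omega)
  have hn0 : (n:ℝ) ≠ 0 := Nat.cast_ne_zero.mpr (by omega)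
  have hn1 : (n:ℝ) - 1 ≠ 0 := by
    have : (2:ℝ) ≤ (n:ℝ) := by exact_mod_cast hn
    linarith
  set C : ℝ := ((n.choose b : ℕ) : ℝ) with hCdef
  set B : ℝ := (b:ℝ)*((b:ℝ)-1)*C / ((n:ℝ)*((n:ℝ)-1)) with hBdef
  have hBeq : ∀ i j : Fin n, i ≠ j → (N i j : ℝ) = B := by
    intro i j hij
    rw [hBdef, eq_div_iff (mul_ne_zero hn0 hn1)]
    exact hNoff i j hij
  have hSval : ∑ i : Fin n, ∑ j : Fin n, (N i j:ℝ) * f i j = ((A:ℝ) - B) * T := by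
    have hrows : ∀ i : Fin n, ∑ j, (N i j:ℝ)*f i j = ((A:ℝ) - B) * ‖ψ i‖^2 := by
      intro i
      rw [← Finset.sum_erase_add _ _ (Finset.mem_univ i), hNdiag i]
      have h3 : f i i = ‖ψ i‖^2 := real_inner_self_eq_norm_sq (ψ i)
      have h4 : ∑ j ∈ Finset.univ.erase i, (N i j:ℝ)*f i j
          = B * ∑ j ∈ Finset.univ.erase i, f i j := by
        rw [Finset.mul_sum]
        refine Finset.sum_congr rfl fun j hj => ?_
        rw [hBeq i j (fun h => (Finset.mem_erase.mp hj).1 h.symm)]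
      rw [h4, hrow i, h3]; ring
    rw [Finset.sum_congr rfl (fun i _ => hrows i), ← Finset.mul_sum, hT]
  have hsmul : (∑ I ∈ P, ‖(b:ℝ)⁻¹ • ∑ i ∈ I, ψ i‖^2)
      = (b:ℝ)⁻¹^2 * ∑ I ∈ P, ‖∑ i ∈ I, ψ i‖^2 := by
    rw [Finset.mul_sum]
    refine Finset.sum_congr rfl fun I _ => ?_
    rw [norm_smul, mul_pow, Real.norm_eq_abs, abs_of_nonneg (by positivity)]
  have hA' : (A:ℝ) = (b:ℝ)*C/(n:ℝ) := by rw [eq_div_iff hn0]; exact hAeq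
  rw [hsmul, hS, hSval, hcard, hA', hBdef]
  field_simp
  ring
end

section
/- Let f_i : ℝ^d → ℝ (i = 1, …, n) be convex and differentiable with L_i-Lipschitz continuous gradient, L_max = max_i L_i, and f = (1/n) Σ_{i=1}^n f_i. Then for every x, y ∈ ℝ^d, (1/n) Σ_{i=1}^n ‖∇f_i(x) − ∇f_i(y)‖² ≤ 2 L_max (f(x) − f(y) − ⟨∇f(y), x − y⟩). -/
open scoped RealInnerProductSpace

section aux
variable {E : Type*} [NormedAddCommGroup E] [InnerProductSpace ℝ E] [CompleteSpace E]

lemma line_hasDerivAt (g : E → ℝ) (g' : E → E) (hg : ∀ z, HasGradientAt g (g' z) z)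
    (w v : E) (t : ℝ) :
    HasDerivAt (fun t : ℝ => g (w + t • v)) ⟪g' (w + t • v), v⟫ t := by
  have hc : HasDerivAt (fun t : ℝ => w + t • v) v t := by
    simpa using ((hasDerivAt_id t).smul_const v).const_add w
  have hF := (hasGradientAt_iff_hasFDerivAt.mp (hg (w + t • v)))
  have := hF.comp_hasDerivAt t hc
  simp only [InnerProductSpace.toDual_apply_apply] at this
  exact this

/-- descent lemma -/
lemma descent_lemma (g : E → ℝ) (g' : E → E) (hg : ∀ z, HasGradientAt g (g' z) z)
    (L : ℝ) (hL : 0 ≤ L) (hLip : ∀ u w, ‖g' u - g' w‖ ≤ L * ‖u - w‖) (u w : E) :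
    g u ≤ g w + ⟪g' w, u - w⟫ + L / 2 * ‖u - w‖ ^ 2 := by
  set v := u - w with hv
  set φ : ℝ → ℝ := fun t => g (w + t • v) - t * ⟪g' w, v⟫ - L * t ^ 2 / 2 * ‖v‖ ^ 2 with hφ
  have hd : ∀ t : ℝ, HasDerivAt φ (⟪g' (w + t • v), v⟫ - ⟪g' w, v⟫ - L * t * ‖v‖ ^ 2) t := by
    intro t
    have h1 := line_hasDerivAt g g' hg w v t
    have h2 : HasDerivAt (fun t : ℝ => t * ⟪g' w, v⟫) ⟪g' w, v⟫ t := by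
      simpa using (hasDerivAt_id t).mul_const ⟪g' w, v⟫
    have h3 : HasDerivAt (fun t : ℝ => L * t ^ 2 / 2 * ‖v‖ ^ 2) (L * t * ‖v‖ ^ 2) t := by
      have h4 : HasDerivAt (fun t : ℝ => t ^ 2) (2 * t) t := by
        simpa using hasDerivAt_pow 2 t
      have := ((h4.const_mul L).div_const 2).mul_const (‖v‖ ^ 2)
      rw [show L * t * ‖v‖ ^ 2 = L * (2 * t) / 2 * ‖v‖ ^ 2 by ring]; exact this
    exact (h1.sub h2).sub h3
  have hanti : AntitoneOn φ (Set.Icc (0:ℝ) 1) := by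
    apply antitoneOn_of_deriv_nonpos (convex_Icc 0 1)
    · exact fun t _ => ((hd t).continuousAt).continuousWithinAt
    · exact fun t _ => ((hd t).differentiableAt).differentiableWithinAt
    · intro t ht
      rw [interior_Icc] at ht
      rw [(hd t).deriv]
      have hinner : ⟪g' (w + t • v) - g' w, v⟫ ≤ ‖g' (w + t • v) - g' w‖ * ‖v‖ :=
        real_inner_le_norm _ _
      have hlip := hLip (w + t • v) w
      have hnorm : ‖(w + t • v) - w‖ = t * ‖v‖ := by
        simp [norm_smul, abs_of_nonneg ht.1.le]
      rw [hnorm] at hlip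
      have h5 : ‖g' (w + t • v) - g' w‖ * ‖v‖ ≤ L * (t * ‖v‖) * ‖v‖ :=
        mul_le_mul_of_nonneg_right hlip (norm_nonneg v)
      have h6 : ⟪g' (w + t • v), v⟫ - ⟪g' w, v⟫ = ⟪g' (w + t • v) - g' w, v⟫ := by
        rw [inner_sub_left]
      rw [h6]
      nlinarith [hinner, h5]
  have key : φ 1 ≤ φ 0 := hanti (Set.mem_Icc.mpr ⟨le_refl 0, zero_le_one⟩)
    (Set.mem_Icc.mpr ⟨zero_le_one, le_refl 1⟩) zero_le_one
  simp only [hφ, one_smul, zero_smul, add_zero, one_pow, mul_one, zero_pow, mul_zero,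
    zero_mul, sub_zero] at key
  have huv : w + v = u := by rw [hv]; abel
  rw [huv] at key
  linarith

/-- convexity gradient inequality -/
lemma convex_grad_lb (g : E → ℝ) (g' : E → E) (hconv : ConvexOn ℝ Set.univ g)
    (hg : ∀ z, HasGradientAt g (g' z) z) (u w : E) :
    g w + ⟪g' w, u - w⟫ ≤ g u := by
  set v := u - w with hv
  set ψ : ℝ → ℝ := fun t => g (w + t • v) with hψ
  have hψconv : ConvexOn ℝ Set.univ ψ := by
    have hmap : ψ = g ∘ (AffineMap.lineMap w u : ℝ →ᵃ[ℝ] E) := by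
      funext t
      simp only [hψ, Function.comp_apply, AffineMap.lineMap_apply, hv, vsub_eq_sub,
        vadd_eq_add]
      abel_nf
    rw [hmap]
    have := hconv.comp_affineMap (AffineMap.lineMap w u : ℝ →ᵃ[ℝ] E)
    simpa using this
  have hd0 : HasDerivAt ψ ⟪g' w, v⟫ 0 := by
    have := line_hasDerivAt g g' hg w v 0
    simpa [hψ] using this
  have hslope := hψconv.le_slope_of_hasDerivAt (Set.mem_univ (0:ℝ)) (Set.mem_univ 1)
    zero_lt_one hd0
  rw [slope_def_field] at hslope
  have h0 : ψ 0 = g w := by simp [hψ]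
  have h1 : ψ 1 = g u := by
    have : w + (1:ℝ) • v = u := by rw [one_smul, hv]; abel
    simp only [hψ]; rw [this]
  rw [h0, h1] at hslope
  simp only [sub_zero, div_one] at hslope
  linarith

/-- cocoercivity -/
lemma cocoercive (g : E → ℝ) (g' : E → E) (hconv : ConvexOn ℝ Set.univ g)
    (hg : ∀ z, HasGradientAt g (g' z) z) (L M : ℝ) (hLM : L ≤ M)
    (hLip : ∀ u w, ‖g' u - g' w‖ ≤ L * ‖u - w‖) (x y : E) :
    ‖g' x - g' y‖ ^ 2 ≤ 2 * M * (g x - g y - ⟪g' y, x - y⟫) := by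
  have hD : 0 ≤ g x - g y - ⟪g' y, x - y⟫ := by
    have := convex_grad_lb g g' hconv hg x y
    linarith
  by_cases hxy : x = y
  · simp [hxy]
  have hxy' : (0:ℝ) < ‖x - y‖ := by
    rw [norm_pos_iff]; exact sub_ne_zero.mpr hxy
  have hL0 : 0 ≤ L := by
    by_contra h
    push_neg at h
    have h1 := (norm_nonneg (g' x - g' y)).trans (hLip x y)
    nlinarith
  have hM0 : 0 ≤ M := hL0.trans hLM
  rcases eq_or_lt_of_le hL0 with hL | hL
  · -- L = 0
    have hp : ‖g' x - g' y‖ = 0 := by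
      have := hLip x y
      rw [← hL] at this
      simp only [zero_mul] at this
      exact le_antisymm this (norm_nonneg _)
    rw [hp]
    have : (0:ℝ) ^ 2 = 0 := by norm_num
    rw [this]
    exact mul_nonneg (by linarith) hD
  · -- L > 0
    set p := g' x - g' y with hp
    set u := x - L⁻¹ • p with hu
    have h1 := descent_lemma g g' hg L hL0 hLip u x
    have h2 := convex_grad_lb g g' hconv hg u y
    have hux : u - x = -(L⁻¹ • p) := by rw [hu]; abel
    have huy : u - y = (x - y) - L⁻¹ • p := by rw [hu]; abel
    have e1 : ⟪g' x, u - x⟫ = -(L⁻¹ * ⟪g' x, p⟫) := by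
      rw [hux, inner_neg_right, real_inner_smul_right]
    have e2 : ‖u - x‖ ^ 2 = (L⁻¹ * ‖p‖) ^ 2 := by
      rw [hux, norm_neg, norm_smul, Real.norm_eq_abs, abs_of_pos (inv_pos.mpr hL)]
    have e3 : ⟪g' y, u - y⟫ = ⟪g' y, x - y⟫ - L⁻¹ * ⟪g' y, p⟫ := by
      rw [huy, inner_sub_right, real_inner_smul_right]
    rw [e1, e2] at h1
    rw [e3] at h2
    have hip : ⟪g' x, p⟫ - ⟪g' y, p⟫ = ‖p‖ ^ 2 := by
      rw [← inner_sub_left, ← hp, real_inner_self_eq_norm_sq]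
    have hLne : L ≠ 0 := ne_of_gt hL
    have hsimp : L / 2 * (L⁻¹ * ‖p‖) ^ 2 = ‖p‖ ^ 2 / (2 * L) := by
      field_simp
    rw [hsimp] at h1
    -- combine
    have H : g y + ⟪g' y, x - y⟫ - L⁻¹ * ⟪g' y, p⟫
        ≤ g x + -(L⁻¹ * ⟪g' x, p⟫) + ‖p‖ ^ 2 / (2 * L) := by linarith
    have hinv : L⁻¹ * ⟪g' x, p⟫ - L⁻¹ * ⟪g' y, p⟫ = ‖p‖ ^ 2 / L := by
      rw [← mul_sub, hip]; field_simp
    have h7 : ‖p‖ ^ 2 / (2 * L) ≤ g x - g y - ⟪g' y, x - y⟫ := by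
      have hhalf : ‖p‖ ^ 2 / L - ‖p‖ ^ 2 / (2 * L) = ‖p‖ ^ 2 / (2 * L) := by
        field_simp; ring
      linarith
    have h8 : ‖p‖ ^ 2 ≤ 2 * L * (g x - g y - ⟪g' y, x - y⟫) := by
      have h9 : (2 * L) * (‖p‖ ^ 2 / (2 * L)) ≤ (2 * L) * (g x - g y - ⟪g' y, x - y⟫) :=
        mul_le_mul_of_nonneg_left h7 (by linarith)
      rwa [mul_div_cancel₀ _ (by positivity : (2:ℝ) * L ≠ 0)] at h9
    calc ‖p‖ ^ 2 ≤ 2 * L * (g x - g y - ⟪g' y, x - y⟫) := h8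
      _ ≤ 2 * M * (g x - g y - ⟪g' y, x - y⟫) :=
        mul_le_mul_of_nonneg_right (by linarith) hD

end aux

/-- for convex `f_i` with `L_i`-Lipschitz gradients and
`f = (1/n) Σ f_i`, `L_max = max_i L_i`, one has
`(1/n) Σ ‖∇f_i(x) − ∇f_i(y)‖² ≤ 2 L_max (f(x) − f(y) − ⟨∇f(y), x − y⟩)`. -/
theorem stmt_2 {d n : ℕ} (hn : 1 ≤ n)
    (f : Fin n → EuclideanSpace ℝ (Fin d) → ℝ)
    (f' : Fin n → EuclideanSpace ℝ (Fin d) → EuclideanSpace ℝ (Fin d))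
    (hconv : ∀ i, ConvexOn ℝ Set.univ (f i))
    (hgrad : ∀ i x, HasGradientAt (f i) (f' i x) x)
    (L : Fin n → ℝ)
    (hLip : ∀ i x y, ‖f' i x - f' i y‖ ≤ L i * ‖x - y‖)
    (Lmax : ℝ) (hLmax : IsGreatest (Set.range L) Lmax)
    (x y : EuclideanSpace ℝ (Fin d)) :
    (n : ℝ)⁻¹ * ∑ i, ‖f' i x - f' i y‖ ^ 2
      ≤ 2 * Lmax * (((n : ℝ)⁻¹ * ∑ i, f i x) - ((n : ℝ)⁻¹ * ∑ i, f i y)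
          - ⟪(n : ℝ)⁻¹ • ∑ i, f' i y, x - y⟫) := by
  have key : ∀ i, ‖f' i x - f' i y‖ ^ 2
      ≤ 2 * Lmax * (f i x - f i y - ⟪f' i y, x - y⟫) := fun i =>
    cocoercive (f i) (f' i) (hconv i) (fun z => hgrad i z) (L i) Lmax
      (hLmax.2 (Set.mem_range_self i)) (fun u w => hLip i u w) x y
  have hsum : ∑ i, ‖f' i x - f' i y‖ ^ 2
      ≤ ∑ i, 2 * Lmax * (f i x - f i y - ⟪f' i y, x - y⟫) :=
    Finset.sum_le_sum fun i _ => key i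
  have hinv : (0:ℝ) ≤ (n : ℝ)⁻¹ := by positivity
  have hrhs : 2 * Lmax * (((n : ℝ)⁻¹ * ∑ i, f i x) - ((n : ℝ)⁻¹ * ∑ i, f i y)
          - ⟪(n : ℝ)⁻¹ • ∑ i, f' i y, x - y⟫)
      = (n : ℝ)⁻¹ * ∑ i, 2 * Lmax * (f i x - f i y - ⟪f' i y, x - y⟫) := by
    rw [real_inner_smul_left, sum_inner]
    simp only [← Finset.mul_sum, Finset.sum_sub_distrib]
    ring
  rw [hrhs]
  exact mul_le_mul_of_nonneg_left hsum hinv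
end

section
/- Let f_i : ℝ^d → ℝ (i = 1, …, n, n ≥ 2) be convex and differentiable with L_i-Lipschitz continuous gradient, L_max = max_i L_i, and f = (1/n) Σ_{i=1}^n f_i. Fix x, x̃, x* ∈ ℝ^d, let I be a subset of {1, …, n} of cardinality b (1 ≤ b ≤ n) chosen uniformly at random, and set ∇f̂(x) = (1/b) Σ_{i∈I} (∇f_i(x) − ∇f_i(x̃)) + ∇f(x̃). Then E‖∇f̂(x) − ∇f(x)‖² ≤ (4 L_max (n − b)/(b(n − 1))) · (D_f(x, x*) + D_f(x̃, x*)), where D_f(z, x*) = f(z) − f(x*) − ⟨∇f(x*), z − x*⟩. -/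
open scoped RealInnerProductSpace

section analysis
variable {F : Type*} [NormedAddCommGroup F] [InnerProductSpace ℝ F] [CompleteSpace F]

lemma svrg_grad_line (g : F → ℝ) (g' : F → F) (hg : ∀ z, HasGradientAt g (g' z) z)
    (x v : F) (t : ℝ) :
    HasDerivAt (fun s : ℝ => g (x + s • v)) ⟪g' (x + t • v), v⟫ t := by
  have h1 : HasDerivAt (fun s : ℝ => x + s • v) v t := by
    simpa using ((hasDerivAt_id t).smul_const v).const_add x
  have h2 := (hasGradientAt_iff_hasFDerivAt.mp (hg (x + t • v))).comp_hasDerivAt t h1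
  simp at h2
  exact h2

lemma svrg_convex_grad_ineq (g : F → ℝ) (g' : F → F) (hcv : ConvexOn ℝ Set.univ g)
    (hg : ∀ z, HasGradientAt g (g' z) z) (x y : F) :
    g x + ⟪g' x, y - x⟫ ≤ g y := by
  rcases eq_or_ne y x with rfl | hne
  · simp
  set φ : ℝ → ℝ := fun t => g (x + t • (y - x)) with hφ
  have hφc : ConvexOn ℝ Set.univ φ := by
    have := hcv.comp_affineMap (AffineMap.lineMap x y)
    have heq : φ = (g ∘ (AffineMap.lineMap x y : ℝ →ᵃ[ℝ] F)) := by
      funext t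
      simp [hφ, AffineMap.lineMap_apply, add_comm, vsub_eq_sub, vadd_eq_add]
    rw [heq]
    simpa using this
  have hder := svrg_grad_line g g' hg x (y - x) 0
  have h01 : (0:ℝ) < 1 := one_pos
  have hs := hφc.le_slope_of_hasDerivAt (Set.mem_univ 0) (Set.mem_univ 1) h01 (by simpa using hder)
  rw [slope_def_field] at hs
  simp only [hφ] at hs
  norm_num at hs
  linarith

lemma svrg_descent (g : F → ℝ) (g' : F → F) (hg : ∀ z, HasGradientAt g (g' z) z)
    (Lc : ℝ) (hLip : ∀ u v, ‖g' u - g' v‖ ≤ Lc * ‖u - v‖) (x y : F) :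
    g y ≤ g x + ⟪g' x, y - x⟫ + Lc / 2 * ‖y - x‖ ^ 2 := by
  set v := y - x with hv
  set c1 : ℝ := ⟪g' x, v⟫ with hc1
  set c2 : ℝ := ‖v‖ ^ 2 with hc2
  set ψ : ℝ → ℝ := fun t => g x + t * c1 + Lc / 2 * t ^ 2 * c2 - g (x + t • v) with hψ
  have hd : ∀ t : ℝ, HasDerivAt ψ (c1 + Lc * t * c2 - ⟪g' (x + t • v), v⟫) t := by
    intro t
    have h1 : HasDerivAt (fun t : ℝ => g x + t * c1 + Lc / 2 * t ^ 2 * c2)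
        (1 * c1 + Lc / 2 * (↑2 * t ^ 1) * c2) t := by
      exact (((hasDerivAt_id t).mul_const c1).const_add (g x)).add
        (((hasDerivAt_pow 2 t).const_mul (Lc / 2)).mul_const c2)
    have h2 := h1.sub (svrg_grad_line g g' hg x v t)
    refine h2.congr_deriv ?_
    ring
  have hmono : MonotoneOn ψ (Set.Icc (0:ℝ) 1) := by
    apply monotoneOn_of_deriv_nonneg (convex_Icc 0 1)
    · exact fun t _ => ((hd t).differentiableAt.continuousAt).continuousWithinAt
    · exact fun t _ => ((hd t).differentiableAt).differentiableWithinAt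
    · intro t ht
      rw [interior_Icc] at ht
      rw [(hd t).deriv]
      have hb : ⟪g' (x + t • v) - g' x, v⟫ ≤ Lc * t * c2 := by
        calc ⟪g' (x + t • v) - g' x, v⟫ ≤ ‖g' (x + t • v) - g' x‖ * ‖v‖ :=
              real_inner_le_norm _ _
          _ ≤ (Lc * ‖(x + t • v) - x‖) * ‖v‖ :=
              mul_le_mul_of_nonneg_right (hLip _ _) (norm_nonneg _)
          _ = Lc * t * c2 := by
              rw [add_sub_cancel_left, norm_smul, Real.norm_eq_abs, abs_of_pos ht.1, hc2]
              ring
      have : ⟪g' (x + t • v), v⟫ - ⟪g' x, v⟫ = ⟪g' (x + t • v) - g' x, v⟫ := by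
        rw [inner_sub_left]
      linarith
  have h01 := hmono (Set.mem_Icc.mpr ⟨le_refl 0, zero_le_one⟩)
    (Set.mem_Icc.mpr ⟨zero_le_one, le_refl 1⟩) zero_le_one
  have e0 : ψ 0 = 0 := by simp [hψ]
  have e1 : ψ 1 = g x + c1 + Lc / 2 * c2 - g y := by
    simp [hψ, hv]
  rw [e0, e1] at h01
  simp only [hc1, hc2, hv] at h01 ⊢
  linarith

lemma svrg_coco (g : F → ℝ) (g' : F → F) (hcv : ConvexOn ℝ Set.univ g)
    (hg : ∀ z, HasGradientAt g (g' z) z) (Lc : ℝ) (hL0 : 0 ≤ Lc)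
    (hLip : ∀ u v, ‖g' u - g' v‖ ≤ Lc * ‖u - v‖) (z w : F) :
    ‖g' z - g' w‖ ^ 2 ≤ 2 * Lc * (g z - g w - ⟪g' w, z - w⟫) := by
  rcases eq_or_lt_of_le hL0 with h0 | hpos
  · have h1 : ‖g' z - g' w‖ ≤ 0 := by
      have := hLip z w; rw [← h0] at this; simpa using this
    have h2 : g' z - g' w = 0 := norm_le_zero_iff.mp h1
    have h3 : g w + ⟪g' w, z - w⟫ ≤ g z := svrg_convex_grad_ineq g g' hcv hg w z
    rw [h2, ← h0]
    simp only [norm_zero]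
    nlinarith [h3]
  · set φ : F → ℝ := fun u => g u - ⟪g' w, u⟫ with hφdef
    set φ' : F → F := fun u => g' u - g' w with hφ'def
    have hφg : ∀ u, HasGradientAt φ (φ' u) u := by
      intro u
      rw [hasGradientAt_iff_hasFDerivAt]
      have h1 := hasGradientAt_iff_hasFDerivAt.mp (hg u)
      have h2 : HasFDerivAt (fun u : F => ⟪g' w, u⟫) (innerSL ℝ (g' w)) u :=
        (innerSL ℝ (g' w)).hasFDerivAt
      have h3 := h1.sub h2
      refine h3.congr_fderiv ?_
      apply ContinuousLinearMap.ext
      intro v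
      simp [hφ'def, inner_sub_left]
    have hφc : ConvexOn ℝ Set.univ φ := by
      refine ⟨convex_univ, ?_⟩
      intro a _ bb _ s t hs ht hst
      have h1 := hcv.2 (Set.mem_univ a) (Set.mem_univ bb) hs ht hst
      simp only [hφdef, smul_eq_mul]
      have h2 : ⟪g' w, s • a + t • bb⟫ = s * ⟪g' w, a⟫ + t * ⟪g' w, bb⟫ := by
        rw [inner_add_right, real_inner_smul_right, real_inner_smul_right]
      simp only [smul_eq_mul] at h1
      rw [h2]
      linarith
    have hφLip : ∀ u v, ‖φ' u - φ' v‖ ≤ Lc * ‖u - v‖ := by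
      intro u v
      have : φ' u - φ' v = g' u - g' v := by simp only [hφ'def]; abel
      rw [this]; exact hLip u v
    have hmin : φ w ≤ φ (z - Lc⁻¹ • φ' z) := by
      have := svrg_convex_grad_ineq φ φ' hφc hφg w (z - Lc⁻¹ • φ' z)
      have hw0 : φ' w = 0 := by simp [hφ'def]
      rw [hw0] at this
      simpa using this
    have hdes := svrg_descent φ φ' hφg Lc hφLip z (z - Lc⁻¹ • φ' z)
    have e1 : (z - Lc⁻¹ • φ' z) - z = -(Lc⁻¹ • φ' z) := by abel
    have e2 : ⟪φ' z, (z - Lc⁻¹ • φ' z) - z⟫ = -(Lc⁻¹ * ‖φ' z‖ ^ 2) := by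
      rw [e1, inner_neg_right, real_inner_smul_right, real_inner_self_eq_norm_sq]
    have e3 : ‖(z - Lc⁻¹ • φ' z) - z‖ ^ 2 = Lc⁻¹ ^ 2 * ‖φ' z‖ ^ 2 := by
      rw [e1, norm_neg, norm_smul, Real.norm_eq_abs, mul_pow, sq_abs]
    rw [e2, e3] at hdes
    have hkey : φ w ≤ φ z - (2 * Lc)⁻¹ * ‖φ' z‖ ^ 2 := by
      have hLne : Lc ≠ 0 := ne_of_gt hpos
      calc φ w ≤ φ (z - Lc⁻¹ • φ' z) := hmin
        _ ≤ φ z + -(Lc⁻¹ * ‖φ' z‖ ^ 2) + Lc / 2 * (Lc⁻¹ ^ 2 * ‖φ' z‖ ^ 2) := hdes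
        _ = φ z - (2 * Lc)⁻¹ * ‖φ' z‖ ^ 2 := by field_simp; ring
    have hφzw : φ z - φ w = g z - g w - ⟪g' w, z - w⟫ := by
      simp only [hφdef, inner_sub_right]
      ring
    have hq : ‖φ' z‖ ^ 2 = ‖g' z - g' w‖ ^ 2 := by rw [hφ'def]
    have h2L : (0:ℝ) < 2 * Lc := by linarith
    rw [hq] at hkey
    have h5 : (2 * Lc)⁻¹ * ‖g' z - g' w‖ ^ 2 ≤ φ z - φ w := by linarith
    rw [hφzw] at h5
    calc ‖g' z - g' w‖ ^ 2 = (2 * Lc) * ((2 * Lc)⁻¹ * ‖g' z - g' w‖ ^ 2) := by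
          field_simp
      _ ≤ 2 * Lc * (g z - g w - ⟪g' w, z - w⟫) :=
          mul_le_mul_of_nonneg_left h5 (le_of_lt h2L)

end analysis

lemma svrg_count {α : Type*} [DecidableEq α] (s t : Finset α) (hts : t ⊆ s) {b : ℕ}
    (htb : t.card ≤ b) :
    ((Finset.powersetCard b s).filter (fun I => t ⊆ I)).card
      = Nat.choose (s.card - t.card) (b - t.card) := by
  rw [← Finset.card_sdiff_of_subset hts, ← Finset.card_powersetCard]
  apply Finset.card_bij' (fun I _ => I \ t) (fun J _ => J ∪ t)
  · intro I hI
    rw [Finset.mem_filter, Finset.mem_powersetCard] at hI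
    obtain ⟨⟨hIs, hIc⟩, htI⟩ := hI
    rw [Finset.mem_powersetCard]
    exact ⟨Finset.sdiff_subset_sdiff hIs (Finset.Subset.refl t),
      by rw [Finset.card_sdiff_of_subset htI, hIc]⟩
  · intro J hJ
    rw [Finset.mem_powersetCard] at hJ
    obtain ⟨hJs, hJc⟩ := hJ
    have hdisj : Disjoint J t := Finset.disjoint_of_subset_left hJs (Finset.sdiff_disjoint)
    rw [Finset.mem_filter, Finset.mem_powersetCard]
    refine ⟨⟨Finset.union_subset (hJs.trans (Finset.sdiff_subset)) hts, ?_⟩,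
      Finset.subset_union_right⟩
    rw [Finset.card_union_of_disjoint hdisj, hJc]
    omega
  · intro I hI
    rw [Finset.mem_filter] at hI
    exact Finset.sdiff_union_of_subset hI.2
  · intro J hJ
    rw [Finset.mem_powersetCard] at hJ
    have hdisj : Disjoint J t := Finset.disjoint_of_subset_left hJ.1 (Finset.sdiff_disjoint)
    exact Finset.union_sdiff_cancel_right hdisj

lemma svrg_natA (n b : ℕ) (hn : 1 ≤ n) (hb : 1 ≤ b) :
    n * Nat.choose (n - 1) (b - 1) = Nat.choose n b * b := by
  obtain ⟨n', rfl⟩ : ∃ n', n = n' + 1 := ⟨n - 1, by omega⟩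
  obtain ⟨b', rfl⟩ : ∃ b', b = b' + 1 := ⟨b - 1, by omega⟩
  simpa using Nat.add_one_mul_choose_eq n' b'

lemma svrg_natP (n b : ℕ) (hn : 2 ≤ n) (hb : 1 ≤ b) :
    n * ((n - 1) * (if 2 ≤ b then Nat.choose (n - 2) (b - 2) else 0))
      = Nat.choose n b * (b * (b - 1)) := by
  by_cases hb2 : 2 ≤ b
  · rw [if_pos hb2]
    have e1 : n - 2 = n - 1 - 1 := by omega
    have e2 : b - 2 = b - 1 - 1 := by omega
    have h1 : (n - 1) * Nat.choose (n - 1 - 1) (b - 1 - 1) = Nat.choose (n - 1) (b - 1) * (b - 1) :=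
      svrg_natA (n - 1) (b - 1) (by omega) (by omega)
    have h2 : n * Nat.choose (n - 1) (b - 1) = Nat.choose n b * b := svrg_natA n b (by omega) hb
    calc n * ((n - 1) * Nat.choose (n - 2) (b - 2))
        = n * ((n - 1) * Nat.choose (n - 1 - 1) (b - 1 - 1)) := by rw [← e1, ← e2]
      _ = n * (Nat.choose (n - 1) (b - 1) * (b - 1)) := by rw [h1]
      _ = n * Nat.choose (n - 1) (b - 1) * (b - 1) := by ring
      _ = Nat.choose n b * b * (b - 1) := by rw [h2]
      _ = Nat.choose n b * (b * (b - 1)) := by ring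
  · have hb1 : b = 1 := by omega
    subst hb1
    simp

lemma svrg_sq_bound {a c e : ℝ} (ha : 0 ≤ a) (hace : a ≤ c + e) :
    a ^ 2 ≤ 2 * c ^ 2 + 2 * e ^ 2 := by
  nlinarith [sq_nonneg (c - e), sq_nonneg (c + e), mul_self_le_mul_self ha hace]

/-- variance bound for the SVRG gradient estimator
`∇f̂(x) = (1/b) Σ_{i∈I} (∇f_i(x) − ∇f_i(x̃)) + ∇f(x̃)`, where `I` is a uniformly
random subset of `{1, …, n}` of cardinality `b`:
`E‖∇f̂(x) − ∇f(x)‖² ≤ (4 L_max (n − b)/(b(n − 1))) (D_f(x, x*) + D_f(x̃, x*))`. -/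
theorem stmt_3 {d n : ℕ} (hn : 2 ≤ n) (b : ℕ) (hb1 : 1 ≤ b) (hbn : b ≤ n)
    (f : Fin n → EuclideanSpace ℝ (Fin d) → ℝ)
    (f' : Fin n → EuclideanSpace ℝ (Fin d) → EuclideanSpace ℝ (Fin d))
    (hconv : ∀ i, ConvexOn ℝ Set.univ (f i))
    (hgrad : ∀ i x, HasGradientAt (f i) (f' i x) x)
    (L : Fin n → ℝ)
    (hLip : ∀ i x y, ‖f' i x - f' i y‖ ≤ L i * ‖x - y‖)
    (Lmax : ℝ) (hLmax : IsGreatest (Set.range L) Lmax)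
    (x xt xstar : EuclideanSpace ℝ (Fin d)) :
    (∑ I ∈ Finset.powersetCard b (Finset.univ : Finset (Fin n)),
        ‖(((b : ℝ)⁻¹ • ∑ i ∈ I, (f' i x - f' i xt)) + (n : ℝ)⁻¹ • ∑ i, f' i xt)
          - (n : ℝ)⁻¹ • ∑ i, f' i x‖ ^ 2)
      / ((Finset.powersetCard b (Finset.univ : Finset (Fin n))).card : ℝ)
    ≤ 4 * Lmax * (((n : ℝ) - b) / (b * ((n : ℝ) - 1)))
        * (((((n : ℝ)⁻¹ * ∑ i, f i x) - ((n : ℝ)⁻¹ * ∑ i, f i xstar))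
              - ⟪(n : ℝ)⁻¹ • ∑ i, f' i xstar, x - xstar⟫)
           + ((((n : ℝ)⁻¹ * ∑ i, f i xt) - ((n : ℝ)⁻¹ * ∑ i, f i xstar))
              - ⟪(n : ℝ)⁻¹ • ∑ i, f' i xstar, xt - xstar⟫)) := by
  classical
  have hn0 : (0:ℝ) < n := by exact_mod_cast (by omega : 0 < n)
  have hb0 : (0:ℝ) < b := by exact_mod_cast (by omega : 0 < b)
  have hbn' : (b:ℝ) ≤ n := by exact_mod_cast hbn
  have hn1 : (0:ℝ) < (n:ℝ) - 1 := by
    have : (2:ℝ) ≤ n := by exact_mod_cast hn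
    linarith
  set P : Finset (Finset (Fin n)) := Finset.powersetCard b (Finset.univ : Finset (Fin n))
    with hPdef
  set gbar : EuclideanSpace ℝ (Fin d) := (n:ℝ)⁻¹ • ∑ i, (f' i x - f' i xt) with hgbardef
  set hh : Fin n → EuclideanSpace ℝ (Fin d) := fun i => (f' i x - f' i xt) - gbar with hhdef
  have hsg : (∑ i, (f' i x - f' i xt)) = (n:ℝ) • gbar := by
    rw [hgbardef, smul_smul, mul_inv_cancel₀ hn0.ne', one_smul]
  have hsum : ∑ i, hh i = 0 := by
    simp only [hhdef]
    rw [Finset.sum_sub_distrib, Finset.sum_const, Finset.card_univ, Fintype.card_fin, hsg,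
      ← Nat.cast_smul_eq_nsmul ℝ, sub_self]
  -- rewrite each term of the LHS sum
  have hterm : ∀ I ∈ P,
      (((b : ℝ)⁻¹ • ∑ i ∈ I, (f' i x - f' i xt)) + (n : ℝ)⁻¹ • ∑ i, f' i xt)
          - (n : ℝ)⁻¹ • ∑ i, f' i x = (b:ℝ)⁻¹ • ∑ i ∈ I, hh i := by
    intro I hI
    obtain ⟨-, hIc⟩ := Finset.mem_powersetCard.mp hI
    have h1 : ∑ i ∈ I, hh i = (∑ i ∈ I, (f' i x - f' i xt)) - (b:ℝ) • gbar := by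
      simp only [hhdef]
      rw [Finset.sum_sub_distrib, Finset.sum_const, hIc, ← Nat.cast_smul_eq_nsmul ℝ]
    have h2 : gbar = (n:ℝ)⁻¹ • ∑ i, f' i x - (n:ℝ)⁻¹ • ∑ i, f' i xt := by
      rw [hgbardef, Finset.sum_sub_distrib, smul_sub]
    rw [h1, smul_sub, smul_smul, inv_mul_cancel₀ hb0.ne', one_smul, h2]
    abel
  have hLHSsum : (∑ I ∈ P,
      ‖(((b : ℝ)⁻¹ • ∑ i ∈ I, (f' i x - f' i xt)) + (n : ℝ)⁻¹ • ∑ i, f' i xt)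
          - (n : ℝ)⁻¹ • ∑ i, f' i x‖ ^ 2)
      = ((b:ℝ)⁻¹)^2 * ∑ I ∈ P, ‖∑ i ∈ I, hh i‖ ^ 2 := by
    rw [Finset.mul_sum]
    refine Finset.sum_congr rfl fun I hI => ?_
    rw [hterm I hI, norm_smul, mul_pow, Real.norm_eq_abs, sq_abs]
  -- counting
  set A : ℕ := Nat.choose (n - 1) (b - 1) with hAdef
  set Pc : ℕ := if 2 ≤ b then Nat.choose (n - 2) (b - 2) else 0 with hPcdef
  set C : ℕ := Nat.choose n b with hCdef
  have hCpos : 0 < C := Nat.choose_pos hbn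
  have hcardP : P.card = C := by
    rw [hPdef, Finset.card_powersetCard, Finset.card_univ, Fintype.card_fin]
  have hNdiag : ∀ i : Fin n, (P.filter (fun I => i ∈ I ∧ i ∈ I)).card = A := by
    intro i
    have hc := svrg_count (Finset.univ : Finset (Fin n)) {i} (by simp)
      (b := b) (by simpa using hb1)
    have heq : Finset.filter (fun I => i ∈ I ∧ i ∈ I)
          (Finset.powersetCard b (Finset.univ : Finset (Fin n)))
        = Finset.filter (fun I => ({i} : Finset (Fin n)) ⊆ I)
          (Finset.powersetCard b (Finset.univ : Finset (Fin n))) := by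
      apply Finset.filter_congr
      intro I _
      simp [Finset.singleton_subset_iff]
    rw [hPdef, heq, hc]
    simp [hAdef]
  have hNoff : ∀ i j : Fin n, i ≠ j → (P.filter (fun I => i ∈ I ∧ j ∈ I)).card = Pc := by
    intro i j hij
    by_cases hb2 : 2 ≤ b
    · have hc := svrg_count (Finset.univ : Finset (Fin n)) {i, j} (by simp)
        (b := b) (by rw [Finset.card_pair hij]; exact hb2)
      have heq : Finset.filter (fun I => i ∈ I ∧ j ∈ I)
            (Finset.powersetCard b (Finset.univ : Finset (Fin n)))
          = Finset.filter (fun I => ({i, j} : Finset (Fin n)) ⊆ I)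
            (Finset.powersetCard b (Finset.univ : Finset (Fin n))) := by
        apply Finset.filter_congr
        intro I _
        simp [Finset.insert_subset_iff, Finset.singleton_subset_iff]
      rw [hPdef, heq, hc, Finset.card_univ, Fintype.card_fin, Finset.card_pair hij,
        hPcdef, if_pos hb2]
    · rw [hPcdef, if_neg hb2]
      rw [Finset.card_eq_zero, Finset.filter_eq_empty_iff]
      intro I hI
      rw [hPdef, Finset.mem_powersetCard] at hI
      rintro ⟨hiI, hjI⟩
      have hsub : ({i, j} : Finset (Fin n)) ⊆ I :=
        Finset.insert_subset hiI (Finset.singleton_subset_iff.mpr hjI)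
      have := Finset.card_le_card hsub
      rw [Finset.card_pair hij, hI.2] at this
      omega
  -- expectation expansion
  have hS : (∑ I ∈ P, ‖∑ i ∈ I, hh i‖ ^ 2) = ((A:ℝ) - Pc) * ∑ i, ‖hh i‖ ^ 2 := by
    have e1 : ∀ I : Finset (Fin n), ‖∑ i ∈ I, hh i‖ ^ 2 = ∑ i ∈ I, ∑ j ∈ I, ⟪hh i, hh j⟫ := by
      intro I
      rw [← real_inner_self_eq_norm_sq, sum_inner]
      exact Finset.sum_congr rfl fun i _ => inner_sum _ _ _
    have e2 : ∀ I : Finset (Fin n), (∑ i ∈ I, ∑ j ∈ I, ⟪hh i, hh j⟫)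
        = ∑ i : Fin n, ∑ j : Fin n, (if i ∈ I ∧ j ∈ I then ⟪hh i, hh j⟫ else 0) := by
      intro I
      have inner1 : ∀ i : Fin n,
          (∑ j ∈ I, ⟪hh i, hh j⟫) = ∑ j : Fin n, (if j ∈ I then ⟪hh i, hh j⟫ else 0) :=
        fun i => (Fintype.sum_ite_mem I _).symm
      calc (∑ i ∈ I, ∑ j ∈ I, ⟪hh i, hh j⟫)
          = ∑ i : Fin n, (if i ∈ I then ∑ j ∈ I, ⟪hh i, hh j⟫ else 0) :=
            (Fintype.sum_ite_mem I _).symm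
        _ = ∑ i : Fin n, ∑ j : Fin n, (if i ∈ I ∧ j ∈ I then ⟪hh i, hh j⟫ else 0) := by
            refine Finset.sum_congr rfl fun i _ => ?_
            by_cases hi : i ∈ I
            · simp only [hi, if_true, true_and]
              exact inner1 i
            · simp [hi]
    rw [Finset.sum_congr rfl fun I _ => (e1 I).trans (e2 I)]
    rw [Finset.sum_comm]
    have e3 : ∀ i : Fin n, (∑ I ∈ P, ∑ j : Fin n, if i ∈ I ∧ j ∈ I then ⟪hh i, hh j⟫ else 0)
        = ∑ j : Fin n, ∑ I ∈ P, (if i ∈ I ∧ j ∈ I then ⟪hh i, hh j⟫ else 0) :=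
      fun i => Finset.sum_comm
    rw [Finset.sum_congr rfl fun i _ => e3 i]
    have e4 : ∀ i j : Fin n, (∑ I ∈ P, (if i ∈ I ∧ j ∈ I then ⟪hh i, hh j⟫ else 0))
        = (Pc:ℝ) * ⟪hh i, hh j⟫ + (if i = j then ((A:ℝ) - Pc) * ⟪hh i, hh j⟫ else 0) := by
      intro i j
      rw [← Finset.sum_filter, Finset.sum_const, nsmul_eq_mul]
      by_cases hij : i = j
      · subst hij
        rw [hNdiag i, if_pos rfl]
        ring
      · rw [hNoff i j hij, if_neg hij]
        ring
    rw [Finset.sum_congr rfl fun i _ => Finset.sum_congr rfl fun j _ => e4 i j]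
    have e5 : ∑ i : Fin n, ∑ j : Fin n, ⟪hh i, hh j⟫ = 0 := by
      have : ∑ i : Fin n, ∑ j : Fin n, ⟪hh i, hh j⟫ = ⟪∑ i, hh i, ∑ j, hh j⟫ := by
        rw [sum_inner]
        exact Finset.sum_congr rfl fun i _ => (inner_sum _ _ _).symm
      rw [this, hsum, inner_zero_left]
    have e6 : ∀ i : Fin n,
        (∑ j : Fin n, (if i = j then ((A:ℝ) - Pc) * ⟪hh i, hh j⟫ else 0))
          = ((A:ℝ) - Pc) * ‖hh i‖ ^ 2 := by
      intro i
      rw [Finset.sum_ite_eq Finset.univ i (fun j => ((A:ℝ) - Pc) * ⟪hh i, hh j⟫)]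
      rw [if_pos (Finset.mem_univ i), real_inner_self_eq_norm_sq]
    calc ∑ i : Fin n, ∑ j : Fin n,
          ((Pc:ℝ) * ⟪hh i, hh j⟫ + (if i = j then ((A:ℝ) - Pc) * ⟪hh i, hh j⟫ else 0))
        = (∑ i : Fin n, ∑ j : Fin n, (Pc:ℝ) * ⟪hh i, hh j⟫)
          + ∑ i : Fin n, ∑ j : Fin n, (if i = j then ((A:ℝ) - Pc) * ⟪hh i, hh j⟫ else 0) := by
          rw [← Finset.sum_add_distrib]
          exact Finset.sum_congr rfl fun i _ => Finset.sum_add_distrib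
      _ = (Pc:ℝ) * ∑ i : Fin n, ∑ j : Fin n, ⟪hh i, hh j⟫
          + ∑ i : Fin n, ((A:ℝ) - Pc) * ‖hh i‖ ^ 2 := by
          rw [Finset.mul_sum]
          congr 1
          · exact Finset.sum_congr rfl fun i _ => (Finset.mul_sum _ _ _).symm
          · exact Finset.sum_congr rfl fun i _ => e6 i
      _ = ((A:ℝ) - Pc) * ∑ i, ‖hh i‖ ^ 2 := by
          rw [e5, mul_zero, zero_add, Finset.mul_sum]
  -- coefficient identities
  have hA' : (n:ℝ) * A = (C:ℝ) * b := by
    have hnatA : n * A = C * b := by rw [hAdef, hCdef]; exact svrg_natA n b (by omega) hb1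
    exact_mod_cast hnatA
  have hP' : (n:ℝ) * (((n:ℝ) - 1) * Pc) = (C:ℝ) * ((b:ℝ) * ((b:ℝ) - 1)) := by
    have hnat : n * ((n - 1) * Pc) = C * (b * (b - 1)) := by
      rw [hPcdef, hCdef]; exact svrg_natP n b hn hb1
    have hcast := congrArg (Nat.cast (R := ℝ)) hnat
    push_cast [Nat.cast_sub (by omega : 1 ≤ n), Nat.cast_sub (by omega : 1 ≤ b)] at hcast
    linarith [hcast]
  have hCr : (0:ℝ) < C := by exact_mod_cast hCpos
  have hcoef : ((A:ℝ) - Pc) * ((b:ℝ)⁻¹)^2 / (C:ℝ)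
      = ((n:ℝ) - b) / ((b:ℝ) * n * ((n:ℝ) - 1)) := by
    have hA2 : (A:ℝ) = (C:ℝ) * b / n := by
      rw [eq_div_iff hn0.ne']
      linear_combination hA'
    have hP2 : (Pc:ℝ) = (C:ℝ) * b * ((b:ℝ) - 1) / ((n:ℝ) * ((n:ℝ) - 1)) := by
      rw [eq_div_iff (ne_of_gt (mul_pos hn0 hn1))]
      linear_combination hP'
    rw [hA2, hP2]
    field_simp
    ring
  -- variance reduction: centered sum is smaller
  have hhsum_eq : (∑ i, ‖hh i‖ ^ 2)
      = (∑ i, ‖f' i x - f' i xt‖ ^ 2) - (n:ℝ) * ‖gbar‖ ^ 2 := by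
    have hexp : ∀ i : Fin n, ‖hh i‖ ^ 2
        = ‖f' i x - f' i xt‖ ^ 2 - 2 * ⟪f' i x - f' i xt, gbar⟫ + ‖gbar‖ ^ 2 := by
      intro i
      simp only [hhdef]
      exact norm_sub_sq_real _ _
    rw [Finset.sum_congr rfl fun i _ => hexp i]
    rw [Finset.sum_add_distrib, Finset.sum_sub_distrib, ← Finset.mul_sum, ← sum_inner, hsg,
      real_inner_smul_left, real_inner_self_eq_norm_sq, Finset.sum_const, Finset.card_univ,
      Fintype.card_fin, nsmul_eq_mul]
    ring
  have hT : (∑ i, ‖hh i‖ ^ 2) ≤ ∑ i, ‖f' i x - f' i xt‖ ^ 2 := by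
    rw [hhsum_eq]
    have h0 : 0 ≤ (n:ℝ) * ‖gbar‖ ^ 2 := by positivity
    linarith
  -- rewrite the RHS bracket
  have hbr : (((((n : ℝ)⁻¹ * ∑ i, f i x) - ((n : ℝ)⁻¹ * ∑ i, f i xstar))
              - ⟪(n : ℝ)⁻¹ • ∑ i, f' i xstar, x - xstar⟫)
           + ((((n : ℝ)⁻¹ * ∑ i, f i xt) - ((n : ℝ)⁻¹ * ∑ i, f i xstar))
              - ⟪(n : ℝ)⁻¹ • ∑ i, f' i xstar, xt - xstar⟫))
      = (n:ℝ)⁻¹ * ∑ i, ((f i x - f i xstar - ⟪f' i xstar, x - xstar⟫)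
          + (f i xt - f i xstar - ⟪f' i xstar, xt - xstar⟫)) := by
    rw [real_inner_smul_left, real_inner_smul_left, sum_inner, sum_inner]
    rw [Finset.sum_add_distrib, Finset.sum_sub_distrib, Finset.sum_sub_distrib,
      Finset.sum_sub_distrib, Finset.sum_sub_distrib]
    ring
  rw [hcardP, hLHSsum, hS, hbr]
  have hL2 : ((b:ℝ)⁻¹)^2 * (((A:ℝ) - Pc) * ∑ i, ‖hh i‖ ^ 2) / (C:ℝ)
      = (((n:ℝ) - b) / ((b:ℝ) * n * ((n:ℝ) - 1))) * ∑ i, ‖hh i‖ ^ 2 := by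
    rw [← hcoef]
    ring
  rw [hL2]
  have hR2 : 4 * Lmax * (((n : ℝ) - b) / (b * ((n : ℝ) - 1)))
        * ((n:ℝ)⁻¹ * ∑ i, ((f i x - f i xstar - ⟪f' i xstar, x - xstar⟫)
          + (f i xt - f i xstar - ⟪f' i xstar, xt - xstar⟫)))
      = (((n:ℝ) - b) / ((b:ℝ) * n * ((n:ℝ) - 1)))
        * (4 * Lmax * ∑ i, ((f i x - f i xstar - ⟪f' i xstar, x - xstar⟫)
          + (f i xt - f i xstar - ⟪f' i xstar, xt - xstar⟫))) := by
    field_simp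
  rw [hR2]
  rcases le_or_gt 0 Lmax with hL0 | hLneg
  · have hκ : 0 ≤ ((n:ℝ) - b) / ((b:ℝ) * n * ((n:ℝ) - 1)) := by
      apply div_nonneg
      · linarith
      · positivity
    apply mul_le_mul_of_nonneg_left _ hκ
    refine hT.trans ?_
    rw [Finset.mul_sum]
    apply Finset.sum_le_sum
    intro i _
    have hLipmax : ∀ u v, ‖f' i u - f' i v‖ ≤ Lmax * ‖u - v‖ := fun u v =>
      (hLip i u v).trans
        (mul_le_mul_of_nonneg_right (hLmax.2 (Set.mem_range_self i)) (norm_nonneg _))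
    have c1 := svrg_coco (f i) (f' i) (hconv i) (hgrad i) Lmax hL0 hLipmax x xstar
    have c2 := svrg_coco (f i) (f' i) (hconv i) (hgrad i) Lmax hL0 hLipmax xt xstar
    have h1 : f' i x - f' i xt = (f' i x - f' i xstar) - (f' i xt - f' i xstar) := by abel
    have h3 : ‖f' i x - f' i xt‖ ≤ ‖f' i x - f' i xstar‖ + ‖f' i xt - f' i xstar‖ := by
      rw [h1]
      exact norm_sub_le _ _
    have h4 : ‖f' i x - f' i xt‖ ^ 2
        ≤ 2 * ‖f' i x - f' i xstar‖ ^ 2 + 2 * ‖f' i xt - f' i xstar‖ ^ 2 :=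
      svrg_sq_bound (norm_nonneg _) h3
    calc ‖f' i x - f' i xt‖ ^ 2
        ≤ 2 * ‖f' i x - f' i xstar‖ ^ 2 + 2 * ‖f' i xt - f' i xstar‖ ^ 2 := h4
      _ ≤ 2 * (2 * Lmax * (f i x - f i xstar - ⟪f' i xstar, x - xstar⟫))
          + 2 * (2 * Lmax * (f i xt - f i xstar - ⟪f' i xstar, xt - xstar⟫)) :=
          add_le_add (by linarith [c1]) (by linarith [c2])
      _ = 4 * Lmax * ((f i x - f i xstar - ⟪f' i xstar, x - xstar⟫)
          + (f i xt - f i xstar - ⟪f' i xstar, xt - xstar⟫)) := by ring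
  · have hconst : ∀ i (u v : EuclideanSpace ℝ (Fin d)), f' i u = f' i v := by
      intro i u v
      have h1 := hLip i u v
      have h2 : L i * ‖u - v‖ ≤ Lmax * ‖u - v‖ :=
        mul_le_mul_of_nonneg_right (hLmax.2 (Set.mem_range_self i)) (norm_nonneg _)
      have h3 : Lmax * ‖u - v‖ ≤ 0 := mul_nonpos_of_nonpos_of_nonneg hLneg.le (norm_nonneg _)
      exact sub_eq_zero.mp (norm_le_zero_iff.mp (h1.trans (h2.trans h3)))
    have hg0 : ∀ i : Fin n, f' i x - f' i xt = 0 := fun i => sub_eq_zero.mpr (hconst i x xt)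
    have hgbar0 : gbar = 0 := by
      rw [hgbardef, Finset.sum_congr rfl fun i _ => hg0 i]
      simp
    have hT0 : (∑ i, ‖hh i‖ ^ 2) = 0 := by
      apply Finset.sum_eq_zero
      intro i _
      simp only [hhdef]
      rw [hg0 i, hgbar0]
      simp
    have hD0 : ∀ (z : EuclideanSpace ℝ (Fin d)) i,
        f i z - f i xstar - ⟪f' i xstar, z - xstar⟫ = 0 := by
      intro z i
      have h1 := svrg_convex_grad_ineq (f i) (f' i) (hconv i) (hgrad i) xstar z
      have h2 := svrg_convex_grad_ineq (f i) (f' i) (hconv i) (hgrad i) z xstar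
      rw [hconst i z xstar] at h2
      have h3 : ⟪f' i xstar, xstar - z⟫ = -⟪f' i xstar, z - xstar⟫ := by
        rw [← inner_neg_right]
        congr 1
        abel
      rw [h3] at h2
      linarith
    have hU0 : (∑ i, ((f i x - f i xstar - ⟪f' i xstar, x - xstar⟫)
          + (f i xt - f i xstar - ⟪f' i xstar, xt - xstar⟫))) = 0 := by
      apply Finset.sum_eq_zero
      intro i _
      rw [hD0 x i, hD0 xt i]
      ring
    rw [hT0, hU0]
    simp
end

section
/- Let f : ℝ^d → ℝ be convex and differentiable with (1/β)-Lipschitz continuous gradient, B an r×d real matrix, and 0 < γ ≤ β. Given x_k, w ∈ ℝ^d and v_{k+1} ∈ ℝ^r, define x_{k+1} = x_k − γw − γBᵀv_{k+1} and x̄_k = x_k − γ∇f(x_k) − γBᵀv_{k+1}. Then for every x ∈ ℝ^d: 2γ(f(x_{k+1}) − f(x)) ≤ ‖x_k − x‖² − ‖x_{k+1} − x‖² + 2γ²‖w − ∇f(x_k)‖² + 2γ⟨B(x − x_{k+1}), v_{k+1}⟩ − 2γ⟨w − ∇f(x_k), x̄_k − x⟩. -/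
open scoped RealInnerProductSpace

section Aux

variable {E : Type*} [NormedAddCommGroup E] [InnerProductSpace ℝ E] [CompleteSpace E]

lemma lineDeriv_aux (f : E → ℝ) (f' : E → E) (hgrad : ∀ x, HasGradientAt f (f' x) x)
    (a b : E) (t : ℝ) :
    HasDerivAt (fun s : ℝ => f (a + s • (b - a))) ⟪f' (a + t • (b - a)), b - a⟫ t := by
  have hline : HasDerivAt (fun s : ℝ => a + s • (b - a)) (b - a) t := by
    simpa using ((hasDerivAt_id t).smul_const (b - a)).const_add a
  have hf : HasFDerivAt f ((InnerProductSpace.toDualMap ℝ E) (f' (a + t • (b - a))))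
      (a + t • (b - a)) := hasGradientAt_iff_hasFDerivAt.mp (hgrad _)
  simpa [Function.comp_def] using hf.comp_hasDerivAt t hline

lemma conv_grad_ineq (f : E → ℝ) (f' : E → E) (hconv : ConvexOn ℝ Set.univ f)
    (hgrad : ∀ x, HasGradientAt f (f' x) x) (a b : E) :
    f a + ⟪f' a, b - a⟫ ≤ f b := by
  set φ : ℝ → ℝ := fun s => f (a + s • (b - a)) with hφ
  have hφ0 : φ 0 = f a := by simp [hφ]
  have hd : HasDerivAt φ ⟪f' a, b - a⟫ 0 := by
    simpa using lineDeriv_aux f f' hgrad a b 0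
  have hslope : Filter.Tendsto (slope φ 0) (nhdsWithin 0 (Set.Ioi 0)) (nhds ⟪f' a, b - a⟫) :=
    (hasDerivAt_iff_tendsto_slope.mp hd).mono_left
      (nhdsWithin_mono 0 (fun t ht => by simpa using (ne_of_gt ht)))
  have hev : ∀ᶠ t in nhdsWithin (0:ℝ) (Set.Ioi 0), slope φ 0 t ≤ f b - f a := by
    filter_upwards [Ioc_mem_nhdsGT one_pos] with t ht
    have hc := hconv.2 (Set.mem_univ b) (Set.mem_univ a) (le_of_lt ht.1)
      (sub_nonneg.mpr ht.2) (by ring)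
    have hpt : t • b + (1 - t) • a = a + t • (b - a) := by
      rw [sub_smul, smul_sub, one_smul]; abel
    rw [hpt] at hc
    have hφt : φ t ≤ t * f b + (1 - t) * f a := by
      simpa [hφ, smul_eq_mul] using hc
    rw [slope_def_field, sub_zero, div_le_iff₀ ht.1, hφ0]
    nlinarith [ht.1.le, ht.2]
  have := le_of_tendsto hslope hev
  linarith

lemma descent_aux (f : E → ℝ) (f' : E → E) (hgrad : ∀ x, HasGradientAt f (f' x) x)
    (β : ℝ) (hβ : 0 < β) (hLip : ∀ x y, ‖f' x - f' y‖ ≤ (1 / β) * ‖x - y‖) (a b : E) :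
    f b ≤ f a + ⟪f' a, b - a⟫ + 1 / (2 * β) * ‖b - a‖ ^ 2 := by
  have hβ' : (0:ℝ) < 1 / β := by positivity
  have hcontf' : Continuous f' := by
    have hl : LipschitzWith (Real.toNNReal (1 / β)) f' := by
      apply LipschitzWith.of_dist_le_mul
      intro x y
      rw [dist_eq_norm, dist_eq_norm, Real.coe_toNNReal _ hβ'.le]
      exact hLip x y
    exact hl.continuous
  set c : ℝ → E := fun t => a + t • (b - a) with hc
  have hcontc : Continuous c := continuous_const.add (continuous_id.smul continuous_const)
  have hcont : Continuous fun t => ⟪f' (c t), b - a⟫ :=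
    (hcontf'.comp hcontc).inner continuous_const
  have hint : ∫ t in (0:ℝ)..1, ⟪f' (c t), b - a⟫ = f b - f a := by
    have h := intervalIntegral.integral_eq_sub_of_hasDerivAt
      (f := fun s => f (c s)) (f' := fun t => ⟪f' (c t), b - a⟫)
      (fun t _ => lineDeriv_aux f f' hgrad a b t) (hcont.intervalIntegrable 0 1)
    simpa [hc] using h
  have hmono : ∫ t in (0:ℝ)..1, ⟪f' (c t), b - a⟫
      ≤ ∫ t in (0:ℝ)..1, (⟪f' a, b - a⟫ + t * (1 / β * ‖b - a‖ ^ 2)) := by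
    have hcont2 : Continuous fun t : ℝ => ⟪f' a, b - a⟫ + t * (1 / β * ‖b - a‖ ^ 2) := by
      fun_prop
    apply intervalIntegral.integral_mono_on zero_le_one (hcont.intervalIntegrable 0 1)
      (hcont2.intervalIntegrable 0 1)
    intro t ht
    have h1 : ⟪f' (c t), b - a⟫ - ⟪f' a, b - a⟫ = ⟪f' (c t) - f' a, b - a⟫ :=
      (inner_sub_left _ _ _).symm
    have h2 : ⟪f' (c t) - f' a, b - a⟫ ≤ ‖f' (c t) - f' a‖ * ‖b - a‖ := real_inner_le_norm _ _
    have h3 : ‖f' (c t) - f' a‖ ≤ 1 / β * (t * ‖b - a‖) := by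
      have hl := hLip (c t) a
      have hca : c t - a = t • (b - a) := by simp [hc]
      rw [hca, norm_smul, Real.norm_eq_abs, abs_of_nonneg ht.1] at hl
      exact hl
    have h4 : 1 / β * (t * ‖b - a‖) * ‖b - a‖ = t * (1 / β * ‖b - a‖ ^ 2) := by ring
    nlinarith [mul_le_mul_of_nonneg_right h3 (norm_nonneg (b - a))]
  have hval : ∫ t in (0:ℝ)..1, (⟪f' a, b - a⟫ + t * (1 / β * ‖b - a‖ ^ 2))
      = ⟪f' a, b - a⟫ + 1 / (2 * β) * ‖b - a‖ ^ 2 := by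
    have hcont3 : Continuous fun t : ℝ => t * (1 / β * ‖b - a‖ ^ 2) := by fun_prop
    rw [intervalIntegral.integral_add intervalIntegrable_const
      (hcont3.intervalIntegrable 0 1),
      intervalIntegral.integral_const, intervalIntegral.integral_mul_const, integral_id]
    simp only [smul_eq_mul]
    field_simp
    ring
  linarith [hmono, hval, hint]

end Aux

/-- the one-step primal estimate (Lemma 2 of the paper) for the
SVRG-PDFP primal update `x_{k+1} = x_k − γw − γBᵀv_{k+1}`, with
`x̄_k = x_k − γ∇f(x_k) − γBᵀv_{k+1}`. -/
theorem stmt_4 {d r : ℕ}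
    (f : EuclideanSpace ℝ (Fin d) → ℝ)
    (f' : EuclideanSpace ℝ (Fin d) → EuclideanSpace ℝ (Fin d))
    (hconv : ConvexOn ℝ Set.univ f)
    (hgrad : ∀ x, HasGradientAt f (f' x) x)
    (β : ℝ)
    (hLip : ∀ x y, ‖f' x - f' y‖ ≤ (1 / β) * ‖x - y‖)
    (B : EuclideanSpace ℝ (Fin d) →L[ℝ] EuclideanSpace ℝ (Fin r))
    (γ : ℝ) (hγ0 : 0 < γ) (hγβ : γ ≤ β)
    (xk w : EuclideanSpace ℝ (Fin d)) (vk1 : EuclideanSpace ℝ (Fin r))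
    (xk1 : EuclideanSpace ℝ (Fin d))
    (hxk1 : xk1 = xk - γ • w - γ • ContinuousLinearMap.adjoint B vk1)
    (xbar : EuclideanSpace ℝ (Fin d))
    (hxbar : xbar = xk - γ • f' xk - γ • ContinuousLinearMap.adjoint B vk1) :
    ∀ x : EuclideanSpace ℝ (Fin d),
      2 * γ * (f xk1 - f x)
        ≤ ‖xk - x‖ ^ 2 - ‖xk1 - x‖ ^ 2
          + 2 * γ ^ 2 * ‖w - f' xk‖ ^ 2
          + 2 * γ * ⟪B (x - xk1), vk1⟫
          - 2 * γ * ⟪w - f' xk, xbar - x⟫ := by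
  intro x
  have hβ : 0 < β := lt_of_lt_of_le hγ0 hγβ
  have hdes := descent_aux f f' hgrad β hβ hLip xk xk1
  have hcvx := conv_grad_ineq f f' hconv hgrad xk x
  have hsum : f xk1 - f x ≤ ⟪f' xk, xk1 - x⟫ + 1 / (2 * β) * ‖xk1 - xk‖ ^ 2 := by
    have h3 : ⟪f' xk, xk1 - xk⟫ - ⟪f' xk, x - xk⟫ = ⟪f' xk, xk1 - x⟫ := by
      rw [← inner_sub_right]
      congr 1
      abel
    linarith
  have hid : ‖xk - x‖ ^ 2 - ‖xk1 - x‖ ^ 2 + 2 * γ ^ 2 * ‖w - f' xk‖ ^ 2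
      + 2 * γ * ⟪B (x - xk1), vk1⟫ - 2 * γ * ⟪w - f' xk, xbar - x⟫
      = 2 * γ * ⟪f' xk, xk1 - x⟫ + ‖xk1 - xk‖ ^ 2 := by
    rw [← ContinuousLinearMap.adjoint_inner_right]
    subst hxk1 hxbar
    set A := ContinuousLinearMap.adjoint B vk1 with hA
    set g := f' xk with hg
    simp only [← real_inner_self_eq_norm_sq, inner_sub_left, inner_sub_right,
      real_inner_smul_left, real_inner_smul_right]
    ring_nf
    rw [real_inner_comm w xk, real_inner_comm A xk, real_inner_comm w x,
      real_inner_comm A x, real_inner_comm A w]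
    ring
  have hb1 : 0 ≤ ‖xk1 - xk‖ ^ 2 := by positivity
  have hgb : γ / β ≤ 1 := (div_le_one hβ).mpr hγβ
  have h1 : 2 * γ * (f xk1 - f x) ≤ 2 * γ * ⟪f' xk, xk1 - x⟫ + (γ / β) * ‖xk1 - xk‖ ^ 2 := by
    have := mul_le_mul_of_nonneg_left hsum (by linarith : (0:ℝ) ≤ 2 * γ)
    calc 2 * γ * (f xk1 - f x) ≤ 2 * γ * (⟪f' xk, xk1 - x⟫ + 1 / (2 * β) * ‖xk1 - xk‖ ^ 2) := this
      _ = 2 * γ * ⟪f' xk, xk1 - x⟫ + (γ / β) * ‖xk1 - xk‖ ^ 2 := by field_simp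
  have h2 : (γ / β) * ‖xk1 - xk‖ ^ 2 ≤ ‖xk1 - xk‖ ^ 2 := by nlinarith
  linarith [hid.ge, hid.le]
end

section
/- Let f : ℝ^d → ℝ be convex and differentiable with (1/β)-Lipschitz continuous gradient, B an r×d real matrix, and 0 < γ ≤ β. Given x_k, w ∈ ℝ^d and v_{k+1} ∈ ℝ^r, define x_{k+1} = x_k − γw − γBᵀv_{k+1}. Then for every x ∈ ℝ^d: f(x_{k+1}) − f(x) ≤ ⟨w − ∇f(x_k), x − x_{k+1}⟩ + ⟨B(x − x_{k+1}), v_{k+1}⟩ + (1/(2γ))(‖x_k − x‖² − ‖x_{k+1} − x‖²). -/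
open scoped RealInnerProductSpace

lemma my_descent {d : ℕ} (f : EuclideanSpace ℝ (Fin d) → ℝ)
    (f' : EuclideanSpace ℝ (Fin d) → EuclideanSpace ℝ (Fin d))
    (hgrad : ∀ x, HasGradientAt f (f' x) x)
    (β : ℝ) (hβ : 0 < β)
    (hLip : ∀ x y, ‖f' x - f' y‖ ≤ (1 / β) * ‖x - y‖)
    (a b : EuclideanSpace ℝ (Fin d)) :
    f b ≤ f a + ⟪f' a, b - a⟫ + (1 / (2 * β)) * ‖b - a‖ ^ 2 := by
  set u := b - a with hu
  have hcont : Continuous f' := by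
    have : LipschitzWith ⟨1 / β, by positivity⟩ f' := by
      apply LipschitzWith.of_dist_le_mul
      intro x y
      rw [dist_eq_norm, dist_eq_norm]; exact hLip x y
    exact this.continuous
  have hd : ∀ t : ℝ, HasDerivAt (fun s : ℝ => f (a + s • u)) ⟪f' (a + t • u), u⟫ t := by
    intro t
    have h1 : HasDerivAt (fun s : ℝ => a + s • u) u t := by
      simpa using ((hasDerivAt_id t).smul_const u).const_add a
    have h2 := (hasGradientAt_iff_hasFDerivAt.mp (hgrad (a + t • u)))
    simpa [InnerProductSpace.toDual_apply_apply, Function.comp_def] using h2.comp_hasDerivAt t h1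
  have hic : Continuous (fun t : ℝ => ⟪f' (a + t • u), u⟫) := by
    exact Continuous.inner (hcont.comp (by continuity)) continuous_const
  have hFTC : ∫ t in (0:ℝ)..1, ⟪f' (a + t • u), u⟫ = f b - f a := by
    have := intervalIntegral.integral_eq_sub_of_hasDerivAt (f := fun s : ℝ => f (a + s • u))
      (fun t _ => hd t) (hic.intervalIntegrable 0 1)
    simpa [hu] using this
  have hbound : ∀ t ∈ Set.Icc (0:ℝ) 1,
      ⟪f' (a + t • u), u⟫ ≤ ⟪f' a, u⟫ + ((1 / β) * ‖u‖ ^ 2) * t := by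
    intro t ht
    have h1 : ⟪f' (a + t • u) - f' a, u⟫ ≤ ‖f' (a + t • u) - f' a‖ * ‖u‖ :=
      real_inner_le_norm _ _
    have h2 : ‖f' (a + t • u) - f' a‖ ≤ (1 / β) * (t * ‖u‖) := by
      have := hLip (a + t • u) a
      simpa [norm_smul, Real.norm_eq_abs, abs_of_nonneg ht.1] using this
    have h3 : ⟪f' (a + t • u), u⟫ = ⟪f' a, u⟫ + ⟪f' (a + t • u) - f' a, u⟫ := by
      rw [inner_sub_left]; ring
    nlinarith [norm_nonneg u, norm_nonneg (f' (a + t • u) - f' a), sq_nonneg (‖u‖)]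
  have hmono : ∫ t in (0:ℝ)..1, ⟪f' (a + t • u), u⟫
      ≤ ∫ t in (0:ℝ)..1, (⟪f' a, u⟫ + ((1 / β) * ‖u‖ ^ 2) * t) := by
    apply intervalIntegral.integral_mono_on (by norm_num) (hic.intervalIntegrable 0 1)
    · exact (intervalIntegrable_const.add ((intervalIntegral.intervalIntegrable_id).const_mul _))
    · exact hbound
  have hval : ∫ t in (0:ℝ)..1, (⟪f' a, u⟫ + ((1 / β) * ‖u‖ ^ 2) * t)
      = ⟪f' a, u⟫ + (1 / (2 * β)) * ‖u‖ ^ 2 := by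
    rw [intervalIntegral.integral_add intervalIntegrable_const
      ((intervalIntegral.intervalIntegrable_id).const_mul _),
      intervalIntegral.integral_const, intervalIntegral.integral_const_mul]
    norm_num
    ring
  rw [hFTC] at hmono
  rw [hval] at hmono
  linarith

/-- the intermediate one-step primal estimate for the SVRG-PDFP
primal update `x_{k+1} = x_k − γw − γBᵀv_{k+1}`. -/
theorem stmt_5 {d r : ℕ}
    (f : EuclideanSpace ℝ (Fin d) → ℝ)
    (f' : EuclideanSpace ℝ (Fin d) → EuclideanSpace ℝ (Fin d))
    (hconv : ConvexOn ℝ Set.univ f)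
    (hgrad : ∀ x, HasGradientAt f (f' x) x)
    (β : ℝ)
    (hLip : ∀ x y, ‖f' x - f' y‖ ≤ (1 / β) * ‖x - y‖)
    (B : EuclideanSpace ℝ (Fin d) →L[ℝ] EuclideanSpace ℝ (Fin r))
    (γ : ℝ) (hγ0 : 0 < γ) (hγβ : γ ≤ β)
    (xk w : EuclideanSpace ℝ (Fin d)) (vk1 : EuclideanSpace ℝ (Fin r))
    (xk1 : EuclideanSpace ℝ (Fin d))
    (hxk1 : xk1 = xk - γ • w - γ • ContinuousLinearMap.adjoint B vk1) :
    ∀ x : EuclideanSpace ℝ (Fin d),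
      f xk1 - f x
        ≤ ⟪w - f' xk, x - xk1⟫ + ⟪B (x - xk1), vk1⟫
          + (1 / (2 * γ)) * (‖xk - x‖ ^ 2 - ‖xk1 - x‖ ^ 2) := by
  intro x
  have hβ : 0 < β := lt_of_lt_of_le hγ0 hγβ
  set Bt := ContinuousLinearMap.adjoint B vk1 with hBt
  -- descent lemma
  have hdesc : f xk1 ≤ f xk + ⟪f' xk, xk1 - xk⟫ + (1 / (2 * β)) * ‖xk1 - xk‖ ^ 2 :=
    my_descent f f' hgrad β hβ hLip xk xk1
  -- convexity: first-order condition
  have hconv1 : f xk + ⟪f' xk, x - xk⟫ ≤ f x := by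
    rcases eq_or_ne x xk with h | h
    · simp [h]
    · -- use line g t = f (xk + t • (x - xk))
      set v := x - xk with hv
      have hgconv : ConvexOn ℝ Set.univ (fun t : ℝ => f (xk + t • v)) := by
        have := hconv.comp_affineMap (AffineMap.lineMap xk x : ℝ →ᵃ[ℝ] _)
        have he : (fun t : ℝ => f (xk + t • v)) = f ∘ (AffineMap.lineMap xk x : ℝ →ᵃ[ℝ] _) := by
          funext t
          simp [AffineMap.lineMap_apply, hv]
          congr 1
          module
        rw [he]
        simpa using this
      have hgd : HasDerivAt (fun t : ℝ => f (xk + t • v)) ⟪f' (xk + (0:ℝ) • v), v⟫ 0 := by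
        have h1 : HasDerivAt (fun s : ℝ => xk + s • v) v 0 := by
          simpa using ((hasDerivAt_id (0:ℝ)).smul_const v).const_add xk
        have h2 := (hasGradientAt_iff_hasFDerivAt.mp (hgrad (xk + (0:ℝ) • v)))
        simpa [InnerProductSpace.toDual_apply_apply, Function.comp_def] using h2.comp_hasDerivAt 0 h1
      have hs := hgconv.le_slope_of_hasDerivAt (Set.mem_univ (0:ℝ)) (Set.mem_univ (1:ℝ))
        (by norm_num) hgd
      have : ⟪f' xk, v⟫ ≤ f x - f xk := by
        have e1 : xk + (1:ℝ) • v = x := by rw [hv]; module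
        have e0 : xk + (0:ℝ) • v = xk := by simp
        have hslope : slope (fun t : ℝ => f (xk + t • v)) 0 1 = f x - f xk := by
          rw [slope_def_field]
          show (f (xk + (1:ℝ) • v) - f (xk + (0:ℝ) • v)) / (1 - 0) = f x - f xk
          rw [e1, e0]
          norm_num
        rw [hslope] at hs
        simpa using hs
      linarith
  -- relation from update rule
  have hupd : xk - xk1 = γ • (w + Bt) := by
    rw [hxk1]; module
  have hinner : ⟪w + Bt, x - xk1⟫ = (1 / γ) * ⟪xk - xk1, x - xk1⟫ := by
    rw [hupd, real_inner_smul_left]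
    field_simp
  have hadj : ⟪B (x - xk1), vk1⟫ = ⟪x - xk1, Bt⟫ := by
    rw [hBt, ContinuousLinearMap.adjoint_inner_right]
  have hpolar : 2 * ⟪xk - xk1, x - xk1⟫ = ‖xk - xk1‖ ^ 2 + ‖x - xk1‖ ^ 2 - ‖xk - x‖ ^ 2 := by
    have h2 := norm_sub_sq_real (xk - xk1) (x - xk1)
    have h1 : (xk - xk1) - (x - xk1) = xk - x := by abel
    rw [h1] at h2
    linarith
  have hns : ‖xk1 - x‖ = ‖x - xk1‖ := norm_sub_rev _ _
  have hns2 : ‖xk1 - xk‖ = ‖xk - xk1‖ := norm_sub_rev _ _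
  -- combine inner product terms
  have hsum : ⟪w - f' xk, x - xk1⟫ + ⟪B (x - xk1), vk1⟫
      = ⟪f' xk, xk1 - x⟫ + (1 / γ) * ⟪xk - xk1, x - xk1⟫ := by
    rw [hadj, ← hinner]
    have e1 : ⟪w - f' xk, x - xk1⟫ = ⟪w, x - xk1⟫ - ⟪f' xk, x - xk1⟫ := inner_sub_left _ _ _
    have e2 : ⟪w + Bt, x - xk1⟫ = ⟪w, x - xk1⟫ + ⟪Bt, x - xk1⟫ := inner_add_left _ _ _
    have e3 : ⟪x - xk1, Bt⟫ = ⟪Bt, x - xk1⟫ := real_inner_comm _ _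
    have e4 : ⟪f' xk, xk1 - x⟫ = - ⟪f' xk, x - xk1⟫ := by
      rw [← inner_neg_right]; congr 1; abel
    linarith
  -- key coefficient inequality
  have hcoef : (1 / (2 * β)) * ‖xk1 - xk‖ ^ 2 ≤ (1 / (2 * γ)) * ‖xk - xk1‖ ^ 2 := by
    rw [hns2]
    apply mul_le_mul_of_nonneg_right _ (sq_nonneg _)
    apply one_div_le_one_div_of_le (by linarith) (by linarith)
  have hγne : (1:ℝ) / γ * ⟪xk - xk1, x - xk1⟫
      = (1 / (2 * γ)) * (‖xk - xk1‖ ^ 2 + ‖x - xk1‖ ^ 2 - ‖xk - x‖ ^ 2) := by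
    rw [← hpolar]
    field_simp
  have hsplit : ⟪f' xk, xk1 - x⟫ = ⟪f' xk, xk1 - xk⟫ - ⟪f' xk, x - xk⟫ := by
    rw [← inner_sub_right]
    congr 1
    abel
  rw [hsum, hγne, hns]
  have hfinal : ⟪f' xk, xk1 - x⟫
        + 1 / (2 * γ) * (‖xk - xk1‖ ^ 2 + ‖x - xk1‖ ^ 2 - ‖xk - x‖ ^ 2)
        + 1 / (2 * γ) * (‖xk - x‖ ^ 2 - ‖x - xk1‖ ^ 2)
      = ⟪f' xk, xk1 - x⟫ + 1 / (2 * γ) * ‖xk - xk1‖ ^ 2 := by ring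
  rw [hfinal]
  linarith [hdesc, hconv1, hcoef, hsplit]
end

section
/- Let h : ℝ^r → ℝ ∪ {+∞} be proper convex lower semicontinuous, B an r×d real matrix, and γ, λ > 0 with λ·ρ_max(BBᵀ) ≤ 1, where ρ_max(BBᵀ) is the largest eigenvalue of BBᵀ. Set G = (γ/(2λ))(I − λBBᵀ) and ‖v‖_G² = ⟨v, Gv⟩. Given x_k, w ∈ ℝ^d and v_k ∈ ℝ^r, define y_{k+1} = x_k − γw − γBᵀv_k, let v_{k+1} be the unique minimizer over v ∈ ℝ^r of (λ/γ)h(v) + ½‖v − ((λ/γ)B y_{k+1} + v_k)‖², and define x_{k+1} = x_k − γw − γBᵀv_{k+1}. Then for every v with h(v) < +∞: h(v_{k+1}) − h(v) ≤ ⟨Bx_{k+1}, v_{k+1} − v⟩ + ‖v − v_k‖_G² − ‖v − v_{k+1}‖_G². -/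
open scoped RealInnerProductSpace

set_option maxHeartbeats 1000000
/-- the one-step dual estimate (Lemma 3 of the paper) for the
PDFP dual update `v_{k+1} = Prox_{(λ/γ)h}((λ/γ)B y_{k+1} + v_k)`.
The extended-real-valued proper convex l.s.c. function `h` is modelled by a
real-valued function on its effective domain `S` (so `h v < +∞` means `v ∈ S`),
and the prox is the (unique) minimizer over `S`. The condition
`λ·ρ_max(BBᵀ) ≤ 1` is expressed as `λ‖Bᵀu‖² ≤ ‖u‖²` for all `u`, and
`‖u‖_G² = ⟨u, Gu⟩ = (γ/(2λ))(‖u‖² − λ‖Bᵀu‖²)` for `G = (γ/(2λ))(I − λBBᵀ)`. -/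
theorem stmt_6 {d r : ℕ}
    (S : Set (EuclideanSpace ℝ (Fin r)))
    (h : EuclideanSpace ℝ (Fin r) → ℝ)
    (hS : S.Nonempty) (hhconv : ConvexOn ℝ S h)
    (hlsc : LowerSemicontinuousOn h S)
    (B : EuclideanSpace ℝ (Fin d) →L[ℝ] EuclideanSpace ℝ (Fin r))
    (γ lam : ℝ) (hγ0 : 0 < γ) (hlam0 : 0 < lam)
    (hρmax : ∀ u : EuclideanSpace ℝ (Fin r),
      lam * ‖ContinuousLinearMap.adjoint B u‖ ^ 2 ≤ ‖u‖ ^ 2)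
    (xk w : EuclideanSpace ℝ (Fin d)) (vk : EuclideanSpace ℝ (Fin r))
    (yk1 : EuclideanSpace ℝ (Fin d))
    (hyk1 : yk1 = xk - γ • w - γ • ContinuousLinearMap.adjoint B vk)
    (vk1 : EuclideanSpace ℝ (Fin r))
    (hvk1mem : vk1 ∈ S)
    (hvk1min : ∀ u ∈ S,
      (lam / γ) * h vk1 + (1 / 2) * ‖vk1 - ((lam / γ) • B yk1 + vk)‖ ^ 2
        ≤ (lam / γ) * h u + (1 / 2) * ‖u - ((lam / γ) • B yk1 + vk)‖ ^ 2)
    (hvk1uniq : ∀ u ∈ S,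
      (∀ u' ∈ S,
        (lam / γ) * h u + (1 / 2) * ‖u - ((lam / γ) • B yk1 + vk)‖ ^ 2
          ≤ (lam / γ) * h u' + (1 / 2) * ‖u' - ((lam / γ) • B yk1 + vk)‖ ^ 2) →
      u = vk1)
    (xk1 : EuclideanSpace ℝ (Fin d))
    (hxk1 : xk1 = xk - γ • w - γ • ContinuousLinearMap.adjoint B vk1) :
    ∀ v ∈ S,
      h vk1 - h v
        ≤ ⟪B xk1, vk1 - v⟫
          + (γ / (2 * lam)) * (‖v - vk‖ ^ 2
              - lam * ‖ContinuousLinearMap.adjoint B (v - vk)‖ ^ 2)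
          - (γ / (2 * lam)) * (‖v - vk1‖ ^ 2
              - lam * ‖ContinuousLinearMap.adjoint B (v - vk1)‖ ^ 2) := by
  intro v hv
  set A := ContinuousLinearMap.adjoint B with hA
  set p : EuclideanSpace ℝ (Fin r) := (lam / γ) • B yk1 + vk with hp
  have hlg : 0 < lam / γ := div_pos hlam0 hγ0
  -- Step 1: the prox variational inequality
  have key : (lam / γ) * (h vk1 - h v) ≤ ⟪p - vk1, vk1 - v⟫ := by
    have hflip : ⟪vk1 - p, v - vk1⟫ = ⟪p - vk1, vk1 - v⟫ := by
      rw [show vk1 - p = -(p - vk1) by abel, show v - vk1 = -(vk1 - v) by abel,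
        inner_neg_neg]
    have hstep : ∀ t : ℝ, 0 < t → t ≤ 1 →
        (lam / γ) * (h vk1 - h v)
          ≤ ⟪p - vk1, vk1 - v⟫ + t * ((1/2) * ‖v - vk1‖^2) := by
      intro t ht0 ht1
      have humem : (1 - t) • vk1 + t • v ∈ S :=
        hhconv.1 hvk1mem hv (by linarith) ht0.le (by ring)
      have hconv : h ((1 - t) • vk1 + t • v) ≤ (1 - t) * h vk1 + t * h v :=
        hhconv.2 hvk1mem hv (by linarith) ht0.le (by ring)
      have hconv' := mul_le_mul_of_nonneg_left hconv hlg.le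
      have hmin := hvk1min _ humem
      have hsum : (1 - t) • vk1 + t • v - p = (vk1 - p) + t • (v - vk1) := by
        module
      have hnorm : ‖(1 - t) • vk1 + t • v - p‖^2
          = ‖vk1 - p‖^2 + 2 * (t * ⟪p - vk1, vk1 - v⟫) + t^2 * ‖v - vk1‖^2 := by
        rw [hsum, norm_add_sq_real, real_inner_smul_right, norm_smul,
          Real.norm_eq_abs, mul_pow, sq_abs, hflip]
      have hexp : (lam / γ) * ((1 - t) * h vk1 + t * h v)
          = (lam / γ) * h vk1 - t * ((lam / γ) * (h vk1 - h v)) := by ring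
      have ht : t * ((lam / γ) * (h vk1 - h v))
          ≤ t * (⟪p - vk1, vk1 - v⟫ + t * ((1/2) * ‖v - vk1‖^2)) := by
        linarith [hmin, hconv', hnorm, hexp]
      exact (mul_le_mul_iff_right₀ ht0).mp ht
    refine le_of_forall_pos_le_add ?_
    intro ε hε
    set C : ℝ := (1/2) * ‖v - vk1‖^2 with hC
    have hC0 : 0 ≤ C := by positivity
    rcases eq_or_lt_of_le hC0 with h0 | h0
    · have := hstep 1 one_pos le_rfl
      rw [← h0] at this
      linarith
    · have ht0 : 0 < min 1 (ε / C) := lt_min one_pos (div_pos hε h0)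
      have ht1 : min 1 (ε / C) ≤ 1 := min_le_left _ _
      have := hstep _ ht0 ht1
      have htC : min 1 (ε / C) * C ≤ ε := by
        calc min 1 (ε / C) * C ≤ (ε / C) * C :=
              mul_le_mul_of_nonneg_right (min_le_right _ _) hC0
          _ = ε := div_mul_cancel₀ _ h0.ne'
      linarith
  -- multiply by γ (> 0) to clear denominators
  have key2 : lam * (h vk1 - h v) ≤ γ * ⟪p - vk1, vk1 - v⟫ := by
    have hmul := mul_le_mul_of_nonneg_left key hγ0.le
    have : γ * ((lam / γ) * (h vk1 - h v)) = lam * (h vk1 - h v) := by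
      field_simp
    linarith [hmul, this.ge, this.le]
  -- Step 2: expand the inner product
  have exp1 : γ * ⟪p - vk1, vk1 - v⟫
      = lam * ⟪B yk1, vk1 - v⟫ + γ * ⟪vk - vk1, vk1 - v⟫ := by
    have hps : p - vk1 = (lam / γ) • B yk1 + (vk - vk1) := by
      rw [hp]; abel
    have hc : γ * (lam / γ) = lam := by field_simp
    rw [hps, inner_add_left, real_inner_smul_left, mul_add, ← mul_assoc, hc]
  have hy : yk1 = xk1 + γ • A (vk1 - vk) := by
    rw [hyk1, hxk1, map_sub]
    module
  have exp2 : ⟪B yk1, vk1 - v⟫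
      = ⟪B xk1, vk1 - v⟫ + γ * ⟪A (vk1 - vk), A (vk1 - v)⟫ := by
    rw [hy, map_add, inner_add_left, map_smul, real_inner_smul_left]
    congr 1
    rw [← ContinuousLinearMap.adjoint_inner_right B, ← hA]
  -- polarization identities
  have id1 : ‖vk - v‖^2
      = ‖vk - vk1‖^2 + 2 * ⟪vk - vk1, vk1 - v⟫ + ‖vk1 - v‖^2 := by
    rw [show vk - v = (vk - vk1) + (vk1 - v) by abel, norm_add_sq_real]
  have id2 : ‖A (v - vk)‖^2
      = ‖A (vk1 - vk)‖^2 - 2 * ⟪A (vk1 - vk), A (vk1 - v)⟫ + ‖A (vk1 - v)‖^2 := by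
    rw [show A (v - vk) = A (vk1 - vk) - A (vk1 - v) by
      rw [← map_sub]; congr 1; abel, norm_sub_sq_real]
  -- norm symmetries
  have e1 : ‖v - vk‖ = ‖vk - v‖ := norm_sub_rev _ _
  have e2 : ‖v - vk1‖ = ‖vk1 - v‖ := norm_sub_rev _ _
  have e3 : ‖A (v - vk1)‖ = ‖A (vk1 - v)‖ := by
    rw [show v - vk1 = -(vk1 - v) by abel, map_neg, norm_neg]
  have e4 : ‖vk - vk1‖ = ‖vk1 - vk‖ := norm_sub_rev _ _
  -- the eigenvalue bound applied to vk1 - vk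
  have e4sq : ‖vk - vk1‖^2 = ‖vk1 - vk‖^2 := by rw [norm_sub_rev]
  have hbb : 0 ≤ γ * (‖vk - vk1‖^2 - lam * ‖A (vk1 - vk)‖^2) :=
    mul_nonneg hγ0.le (by rw [e4sq]; linarith [hρmax (vk1 - vk)])
  -- conclude, after multiplying the goal by 2 * lam
  have h2l : (0:ℝ) < 2 * lam := by positivity
  rw [← mul_le_mul_iff_right₀ h2l]
  have hgoal_eq : 2 * lam * (⟪B xk1, vk1 - v⟫
        + (γ / (2 * lam)) * (‖v - vk‖ ^ 2 - lam * ‖A (v - vk)‖ ^ 2)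
        - (γ / (2 * lam)) * (‖v - vk1‖ ^ 2 - lam * ‖A (v - vk1)‖ ^ 2))
      = 2 * lam * ⟪B xk1, vk1 - v⟫
        + γ * (‖v - vk‖ ^ 2 - lam * ‖A (v - vk)‖ ^ 2)
        - γ * (‖v - vk1‖ ^ 2 - lam * ‖A (v - vk1)‖ ^ 2) := by
    field_simp
  have hI1 : ⟪vk - vk1, vk1 - v⟫
      = (‖vk - v‖^2 - ‖vk - vk1‖^2 - ‖vk1 - v‖^2) / 2 := by linarith [id1]
  have hI2 : ⟪A (vk1 - vk), A (vk1 - v)⟫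
      = (‖A (vk1 - vk)‖^2 + ‖A (vk1 - v)‖^2 - ‖A (v - vk)‖^2) / 2 := by
    linarith [id2]
  have step : lam * (h vk1 - h v)
      ≤ lam * ⟪B xk1, vk1 - v⟫
        + lam * γ * ((‖A (vk1 - vk)‖^2 + ‖A (vk1 - v)‖^2 - ‖A (v - vk)‖^2) / 2)
        + γ * ((‖vk - v‖^2 - ‖vk - vk1‖^2 - ‖vk1 - v‖^2) / 2) := by
    calc lam * (h vk1 - h v) ≤ γ * ⟪p - vk1, vk1 - v⟫ := key2
      _ = lam * ⟪B yk1, vk1 - v⟫ + γ * ⟪vk - vk1, vk1 - v⟫ := exp1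
      _ = _ := by rw [exp2, hI1, hI2]; ring
  rw [hgoal_eq, e1, e2, e3]
  linarith [step, hbb]
end

section
/- Let f : ℝ^d → ℝ be convex and differentiable with (1/β)-Lipschitz continuous gradient, B an r×d real matrix, h : ℝ^r → ℝ ∪ {+∞} proper convex lower semicontinuous, 0 < γ ≤ β, and 0 < λ ≤ 1/ρ_max(BBᵀ); set G = (γ/(2λ))(I − λBBᵀ) and ‖v‖_G² = ⟨v, Gv⟩. Suppose (x*, v*) satisfies ∇f(x*) + Bᵀv* = 0 and h(v) − h(v*) − ⟨Bx*, v − v*⟩ ≥ 0 for all v ∈ ℝ^r. Given x_k, w ∈ ℝ^d and v_k ∈ ℝ^r, define e = w − ∇f(x_k), y_{k+1} = x_k − γw − γBᵀv_k, v_{k+1} = the unique minimizer over v of (λ/γ)h(v) + ½‖v − ((λ/γ)B y_{k+1} + v_k)‖², x_{k+1} = x_k − γw − γBᵀv_{k+1}, and x̄_k = x_k − γ∇f(x_k) − γBᵀv_{k+1}. Then 2γ R(x_{k+1}, v_{k+1}) ≤ ‖x_k − x*‖² − ‖x_{k+1} − x*‖² + 2γ‖v_k − v*‖_G² − 2γ‖v_{k+1}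 − v*‖_G² + 2γ²‖e‖² − 2γ⟨e, x̄_k − x*⟩, where R(x, v) = f(x) − f(x*) − ⟨∇f(x*), x − x*⟩ + h(v) − h(v*) − ⟨Bx*, v − v*⟩. -/
open scoped RealInnerProductSpace

variable {E : Type*} [NormedAddCommGroup E] [InnerProductSpace ℝ E] [CompleteSpace E]

/-- Derivative of `f` along a line, from the gradient. -/
lemma aux_line_deriv (f : E → ℝ) (f' : E → E) (hgrad : ∀ x, HasGradientAt f (f' x) x)
    (x v : E) (t : ℝ) :
    HasDerivAt (fun s : ℝ => f (x + s • v)) ⟪f' (x + t • v), v⟫ t := by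
  have h1 : HasDerivAt (fun s : ℝ => x + s • v) v t := by
    simpa using ((hasDerivAt_id t).smul_const v).const_add x
  have h2 := (hasGradientAt_iff_hasFDerivAt.mp (hgrad (x + t • v)))
  have h3 := h2.comp_hasDerivAt t h1
  simp at h3
  exact h3

/-- First-order convexity inequality. -/
lemma aux_convex_ineq (f : E → ℝ) (f' : E → E) (hconv : ConvexOn ℝ Set.univ f)
    (hgrad : ∀ x, HasGradientAt f (f' x) x) (x y : E) :
    f x + ⟪f' x, y - x⟫ ≤ f y := by
  have hline : HasDerivAt (fun s : ℝ => f (x + s • (y - x))) ⟪f' x, y - x⟫ 0 := by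
    have := aux_line_deriv f f' hgrad x (y - x) 0
    simpa using this
  have hslope := hasDerivAt_iff_tendsto_slope.mp hline
  have h2 : Filter.Tendsto (slope (fun s : ℝ => f (x + s • (y - x))) 0) (nhdsWithin 0 (Set.Ioi 0))
      (nhds ⟪f' x, y - x⟫) := by
    refine hslope.mono_left (nhdsWithin_mono 0 ?_)
    intro t ht
    simpa using (ne_of_gt ht)
  have hub : ∀ᶠ t in nhdsWithin (0:ℝ) (Set.Ioi 0),
      slope (fun s : ℝ => f (x + s • (y - x))) 0 t ≤ f y - f x := by
    filter_upwards [Ioc_mem_nhdsGT (zero_lt_one)] with t ht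
    have hcomb : f (x + t • (y - x)) ≤ (1 - t) * f x + t * f y := by
      have hpt : x + t • (y - x) = (1 - t) • x + t • y := by module
      rw [hpt]
      exact hconv.2 (Set.mem_univ x) (Set.mem_univ y) (by linarith [ht.2]) (le_of_lt ht.1)
        (by ring)
    have hslope_eq : slope (fun s : ℝ => f (x + s • (y - x))) 0 t
        = (f (x + t • (y - x)) - f x) / t := by
      simp [slope_def_field]
    rw [hslope_eq, div_le_iff₀ ht.1]
    nlinarith [ht.1]
  have := le_of_tendsto h2 hub
  linarith

/-- Descent lemma from Lipschitz gradient. -/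
lemma aux_descent (f : E → ℝ) (f' : E → E) (hgrad : ∀ x, HasGradientAt f (f' x) x)
    (β : ℝ) (hβ : 0 < β) (hLip : ∀ x y, ‖f' x - f' y‖ ≤ (1 / β) * ‖x - y‖) (x y : E) :
    f y ≤ f x + ⟪f' x, y - x⟫ + (1 / (2 * β)) * ‖y - x‖ ^ 2 := by
  set v := y - x with hv
  set g : ℝ → ℝ := fun t => f (x + t • v) - t * ⟪f' x, v⟫ - t ^ 2 * ((1 / (2 * β)) * ‖v‖ ^ 2)
    with hgdef
  have hg : ∀ t : ℝ, HasDerivAt g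
      (⟪f' (x + t • v), v⟫ - ⟪f' x, v⟫ - t * ((1 / β) * ‖v‖ ^ 2)) t := by
    intro t
    have h1 := aux_line_deriv f f' hgrad x v t
    have h2 : HasDerivAt (fun s : ℝ => s * ⟪f' x, v⟫) ⟪f' x, v⟫ t := by
      simpa using (hasDerivAt_id t).mul_const ⟪f' x, v⟫
    have h3 : HasDerivAt (fun s : ℝ => s ^ 2 * ((1 / (2 * β)) * ‖v‖ ^ 2))
        (2 * t * ((1 / (2 * β)) * ‖v‖ ^ 2)) t := by
      simpa using (hasDerivAt_pow 2 t).mul_const ((1 / (2 * β)) * ‖v‖ ^ 2)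
    have := (h1.sub h2).sub h3
    refine this.congr_deriv ?_
    ring
  have hanti : AntitoneOn g (Set.Icc 0 1) := by
    apply antitoneOn_of_deriv_nonpos (convex_Icc 0 1)
    · exact (fun t _ => ((hg t).differentiableAt).continuousAt.continuousWithinAt)
    · intro t _
      exact ((hg t).differentiableAt).differentiableWithinAt
    · intro t ht
      rw [interior_Icc] at ht
      rw [(hg t).deriv]
      have hb1 : ⟪f' (x + t • v), v⟫ - ⟪f' x, v⟫ = ⟪f' (x + t • v) - f' x, v⟫ := by
        rw [inner_sub_left]
      have hb2 : ⟪f' (x + t • v) - f' x, v⟫ ≤ ‖f' (x + t • v) - f' x‖ * ‖v‖ :=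
        real_inner_le_norm _ _
      have hb3 : ‖f' (x + t • v) - f' x‖ ≤ (1 / β) * ‖(x + t • v) - x‖ := hLip _ _
      have hb4 : ‖(x + t • v) - x‖ = t * ‖v‖ := by
        simp [norm_smul, abs_of_pos ht.1]
      have hb5 : ‖f' (x + t • v) - f' x‖ * ‖v‖ ≤ (1 / β) * (t * ‖v‖) * ‖v‖ := by
        apply mul_le_mul_of_nonneg_right _ (norm_nonneg v)
        rw [← hb4]; exact hb3
      have : (1 / β) * (t * ‖v‖) * ‖v‖ = t * ((1 / β) * ‖v‖ ^ 2) := by ring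
      linarith
  have h01 := hanti (Set.mem_Icc.mpr ⟨le_refl 0, zero_le_one⟩)
    (Set.mem_Icc.mpr ⟨zero_le_one, le_refl 1⟩) zero_le_one
  have hg0 : g 0 = f x := by simp [hgdef]
  have hg1 : g 1 = f y - ⟪f' x, v⟫ - (1 / (2 * β)) * ‖v‖ ^ 2 := by
    have hxy : x + (1:ℝ) • v = y := by rw [hv]; module
    have hxv : x + v = y := by rw [hv]; abel
    simp [hgdef, hxv]
  rw [hg0, hg1] at h01
  linarith

/-- Optimality of the prox step. -/
lemma aux_prox_opt {F : Type*} [NormedAddCommGroup F] [InnerProductSpace ℝ F]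
    (S : Set F) (h : F → ℝ) (hh : ConvexOn ℝ S h) (a : ℝ) (_ha : 0 < a) (c z u : F)
    (hz : z ∈ S) (hu : u ∈ S)
    (hmin : ∀ p ∈ S, a * h z + (1/2) * ‖z - c‖ ^ 2 ≤ a * h p + (1/2) * ‖p - c‖ ^ 2) :
    0 ≤ a * (h u - h z) + ⟪z - c, u - z⟫ := by
  set K : ℝ := a * (h u - h z) + ⟪z - c, u - z⟫ with hK
  have key : ∀ t ∈ Set.Ioc (0:ℝ) 1, 0 ≤ K + t * ((1/2) * ‖u - z‖ ^ 2) := by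
    intro t ht
    have hmem : z + t • (u - z) ∈ S := by
      have : z + t • (u - z) = (1 - t) • z + t • u := by module
      rw [this]
      exact hh.1 hz hu (by linarith [ht.2]) (le_of_lt ht.1) (by ring)
    have hcomb : h (z + t • (u - z)) ≤ (1 - t) * h z + t * h u := by
      have : z + t • (u - z) = (1 - t) • z + t • u := by module
      rw [this]
      exact hh.2 hz hu (by linarith [ht.2]) (le_of_lt ht.1) (by ring)
    have hnorm : ‖z + t • (u - z) - c‖ ^ 2
        = ‖z - c‖ ^ 2 + 2 * (t * ⟪z - c, u - z⟫) + t ^ 2 * ‖u - z‖ ^ 2 := by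
      have h1 : z + t • (u - z) - c = (z - c) + t • (u - z) := by abel
      rw [h1, norm_add_sq_real, real_inner_smul_right, norm_smul]
      rw [Real.norm_eq_abs, abs_of_pos ht.1]
      ring
    have hm := hmin _ hmem
    have hchain : a * h z + (1/2) * ‖z - c‖ ^ 2
        ≤ a * ((1 - t) * h z + t * h u)
          + (1/2) * (‖z - c‖ ^ 2 + 2 * (t * ⟪z - c, u - z⟫) + t ^ 2 * ‖u - z‖ ^ 2) := by
      calc a * h z + (1/2) * ‖z - c‖ ^ 2
          ≤ a * h (z + t • (u - z)) + (1/2) * ‖z + t • (u - z) - c‖ ^ 2 := hm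
        _ ≤ _ := by
            rw [hnorm]
            have := mul_le_mul_of_nonneg_left hcomb (le_of_lt _ha)
            linarith
    have ht0 := ht.1
    have : 0 ≤ t * K + t ^ 2 * ((1/2) * ‖u - z‖ ^ 2) := by
      rw [hK]; nlinarith [hchain]
    nlinarith [this, ht0, sq_nonneg ‖u - z‖]
  have hten : Filter.Tendsto (fun t : ℝ => K + t * ((1/2) * ‖u - z‖ ^ 2))
      (nhdsWithin 0 (Set.Ioi 0)) (nhds K) := by
    have hc : Continuous (fun t : ℝ => K + t * ((1/2) * ‖u - z‖ ^ 2)) := by continuity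
    have := hc.tendsto 0
    simpa using this.mono_left nhdsWithin_le_nhds
  refine ge_of_tendsto hten ?_
  filter_upwards [Ioc_mem_nhdsGT (zero_lt_one)] with t ht
  exact key t ht


set_option maxHeartbeats 1000000 in
/-- the deterministic one-step estimate for an SVRG-PDFP step with
inexact gradient `w` (error `e = w − ∇f(x_k)`), at a saddle point `(x*, v*)`:
`2γ R(x_{k+1}, v_{k+1}) ≤ ‖x_k − x*‖² − ‖x_{k+1} − x*‖² + 2γ‖v_k − v*‖_G²
  − 2γ‖v_{k+1} − v*‖_G² + 2γ²‖e‖² − 2γ⟨e, x̄_k − x*⟩`.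
Here `h` (the conjugate `g*`) is modelled by a real-valued function on its
effective domain `S`, `λ ≤ 1/ρ_max(BBᵀ)` is expressed as `λ‖Bᵀu‖² ≤ ‖u‖²`, and
`‖u‖_G² = (γ/(2λ))(‖u‖² − λ‖Bᵀu‖²)` for `G = (γ/(2λ))(I − λBBᵀ)`. -/
theorem stmt_7 {d r : ℕ}
    (f : EuclideanSpace ℝ (Fin d) → ℝ)
    (f' : EuclideanSpace ℝ (Fin d) → EuclideanSpace ℝ (Fin d))
    (hconv : ConvexOn ℝ Set.univ f)
    (hgrad : ∀ x, HasGradientAt f (f' x) x)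
    (β : ℝ)
    (hLip : ∀ x y, ‖f' x - f' y‖ ≤ (1 / β) * ‖x - y‖)
    (B : EuclideanSpace ℝ (Fin d) →L[ℝ] EuclideanSpace ℝ (Fin r))
    (S : Set (EuclideanSpace ℝ (Fin r)))
    (h : EuclideanSpace ℝ (Fin r) → ℝ)
    (hS : S.Nonempty) (hhconv : ConvexOn ℝ S h)
    (hlsc : LowerSemicontinuousOn h S)
    (γ lam : ℝ) (hγ0 : 0 < γ) (hγβ : γ ≤ β) (hlam0 : 0 < lam)
    (hρmax : ∀ u : EuclideanSpace ℝ (Fin r),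
      lam * ‖ContinuousLinearMap.adjoint B u‖ ^ 2 ≤ ‖u‖ ^ 2)
    (xstar : EuclideanSpace ℝ (Fin d)) (vstar : EuclideanSpace ℝ (Fin r))
    (hvstar : vstar ∈ S)
    (hopt1 : f' xstar + ContinuousLinearMap.adjoint B vstar = 0)
    (hopt2 : ∀ v ∈ S, h v - h vstar - ⟪B xstar, v - vstar⟫ ≥ 0)
    (xk w : EuclideanSpace ℝ (Fin d)) (vk : EuclideanSpace ℝ (Fin r))
    (e : EuclideanSpace ℝ (Fin d)) (he : e = w - f' xk)
    (yk1 : EuclideanSpace ℝ (Fin d))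
    (hyk1 : yk1 = xk - γ • w - γ • ContinuousLinearMap.adjoint B vk)
    (vk1 : EuclideanSpace ℝ (Fin r))
    (hvk1mem : vk1 ∈ S)
    (hvk1min : ∀ u ∈ S,
      (lam / γ) * h vk1 + (1 / 2) * ‖vk1 - ((lam / γ) • B yk1 + vk)‖ ^ 2
        ≤ (lam / γ) * h u + (1 / 2) * ‖u - ((lam / γ) • B yk1 + vk)‖ ^ 2)
    (xk1 : EuclideanSpace ℝ (Fin d))
    (hxk1 : xk1 = xk - γ • w - γ • ContinuousLinearMap.adjoint B vk1)
    (xbar : EuclideanSpace ℝ (Fin d))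
    (hxbar : xbar = xk - γ • f' xk - γ • ContinuousLinearMap.adjoint B vk1) :
    2 * γ * ((f xk1 - f xstar - ⟪f' xstar, xk1 - xstar⟫)
        + (h vk1 - h vstar - ⟪B xstar, vk1 - vstar⟫))
      ≤ ‖xk - xstar‖ ^ 2 - ‖xk1 - xstar‖ ^ 2
        + 2 * γ * ((γ / (2 * lam)) * (‖vk - vstar‖ ^ 2
            - lam * ‖ContinuousLinearMap.adjoint B (vk - vstar)‖ ^ 2))
        - 2 * γ * ((γ / (2 * lam)) * (‖vk1 - vstar‖ ^ 2
            - lam * ‖ContinuousLinearMap.adjoint B (vk1 - vstar)‖ ^ 2))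
        + 2 * γ ^ 2 * ‖e‖ ^ 2
        - 2 * γ * ⟪e, xbar - xstar⟫ := by
  have hβ : (0:ℝ) < β := lt_of_lt_of_le hγ0 hγβ
  have hγne : γ ≠ 0 := ne_of_gt hγ0
  have hlamne : lam ≠ 0 := ne_of_gt hlam0
  set Bt := ContinuousLinearMap.adjoint B with hBtdef
  -- polarization helper
  have polar : ∀ (a b : EuclideanSpace ℝ (Fin d)),
      2 * ⟪a - b, b⟫ = ‖a‖ ^ 2 - ‖b‖ ^ 2 - ‖a - b‖ ^ 2 := by
    intro a b
    have h1 := norm_sub_sq_real a b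
    have h2 : ⟪a - b, b⟫ = ⟪a, b⟫ - ‖b‖ ^ 2 := by
      rw [inner_sub_left, real_inner_self_eq_norm_sq]
    linarith
  have polarr : ∀ (a b : EuclideanSpace ℝ (Fin r)),
      2 * ⟪a - b, b⟫ = ‖a‖ ^ 2 - ‖b‖ ^ 2 - ‖a - b‖ ^ 2 := by
    intro a b
    have h1 := norm_sub_sq_real a b
    have h2 : ⟪a - b, b⟫ = ⟪a, b⟫ - ‖b‖ ^ 2 := by
      rw [inner_sub_left, real_inner_self_eq_norm_sq]
    linarith
  -- F1 : smoothness + convexity bound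
  have hd := aux_descent f f' hgrad β hβ hLip xk xk1
  have hc := aux_convex_ineq f f' hconv hgrad xk xstar
  have hsplit : ⟪f' xk, xk1 - xstar⟫ = ⟪f' xk, xk1 - xk⟫ - ⟪f' xk, xstar - xk⟫ := by
    rw [← inner_sub_right]
    congr 1
    abel
  have hDf : f xk1 - f xstar ≤ ⟪f' xk, xk1 - xstar⟫ + (1 / (2 * β)) * ‖xk1 - xk‖ ^ 2 := by
    rw [hsplit]; linarith
  have hγDf := mul_le_mul_of_nonneg_left hDf (le_of_lt hγ0)
  have hfk : γ • f' xk = (xk - xk1) - γ • e - γ • (Bt vk1) := by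
    rw [hxk1, he]; module
  have h1 : γ * ⟪f' xk, xk1 - xstar⟫ = ⟪xk - xk1, xk1 - xstar⟫
      - γ * ⟪e, xk1 - xstar⟫ - γ * ⟪Bt vk1, xk1 - xstar⟫ := by
    rw [← real_inner_smul_left, hfk, inner_sub_left, inner_sub_left,
      real_inner_smul_left, real_inner_smul_left]
  have hfs : f' xstar = -(Bt vstar) := by
    rw [hBtdef]; exact eq_neg_of_add_eq_zero_left hopt1
  have h2 : γ * ⟪f' xstar, xk1 - xstar⟫ = -(γ * ⟪Bt vstar, xk1 - xstar⟫) := by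
    rw [hfs, inner_neg_left]; ring
  have F1 : γ * (f xk1 - f xstar - ⟪f' xstar, xk1 - xstar⟫)
      ≤ ⟪xk - xk1, xk1 - xstar⟫ - γ * ⟪e, xk1 - xstar⟫ - γ * ⟪Bt vk1, xk1 - xstar⟫
        + γ * ⟪Bt vstar, xk1 - xstar⟫ + (1/2) * (γ / β) * ‖xk1 - xk‖ ^ 2 := by
    have hexp : γ * (⟪f' xk, xk1 - xstar⟫ + 1 / (2 * β) * ‖xk1 - xk‖ ^ 2)
        = γ * ⟪f' xk, xk1 - xstar⟫ + (1/2) * (γ / β) * ‖xk1 - xk‖ ^ 2 := by ring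
    rw [hexp] at hγDf
    have hlhs : γ * (f xk1 - f xstar - ⟪f' xstar, xk1 - xstar⟫)
        = γ * (f xk1 - f xstar) - γ * ⟪f' xstar, xk1 - xstar⟫ := by ring
    rw [hlhs, h2]
    linarith
  -- F2 : prox optimality
  have hprox := aux_prox_opt S h hhconv (lam / γ) (div_pos hlam0 hγ0)
    ((lam / γ) • B yk1 + vk) vk1 vstar hvk1mem hvstar hvk1min
  have hinner : ⟪vk1 - ((lam / γ) • B yk1 + vk), vstar - vk1⟫
      = ⟪vk1 - vk, vstar - vk1⟫ - (lam / γ) * ⟪B yk1, vstar - vk1⟫ := by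
    rw [show vk1 - ((lam / γ) • B yk1 + vk) = (vk1 - vk) - (lam / γ) • (B yk1) by abel,
      inner_sub_left, real_inner_smul_left]
  rw [hinner] at hprox
  have hpos : (0:ℝ) < γ ^ 2 / lam := by positivity
  have hneg : γ * ⟪B yk1, vstar - vk1⟫ = -(γ * ⟪B yk1, vk1 - vstar⟫) := by
    rw [show vstar - vk1 = -(vk1 - vstar) by abel, inner_neg_right]; ring
  have F2 : γ * (h vk1 - h vstar) ≤ (γ ^ 2 / lam) * ⟪vk1 - vk, vstar - vk1⟫
      + γ * ⟪B yk1, vk1 - vstar⟫ := by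
    have hm := mul_le_mul_of_nonneg_left hprox (le_of_lt hpos)
    have heq : (γ ^ 2 / lam) * ((lam / γ) * (h vstar - h vk1)
        + (⟪vk1 - vk, vstar - vk1⟫ - (lam / γ) * ⟪B yk1, vstar - vk1⟫))
        = γ * (h vstar - h vk1) + (γ ^ 2 / lam) * ⟪vk1 - vk, vstar - vk1⟫
          - γ * ⟪B yk1, vstar - vk1⟫ := by
      field_simp
      ring
    rw [heq] at hm
    rw [hneg] at hm
    simp only [mul_zero] at hm
    linarith
  -- F3 : adjoint manipulation
  have hy : yk1 = xk1 + γ • Bt (vk1 - vk) := by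
    rw [hyk1, hxk1, hBtdef, map_sub]; module
  have e1 : ⟪B yk1, vk1 - vstar⟫ = ⟪yk1, Bt (vk1 - vstar)⟫ :=
    (ContinuousLinearMap.adjoint_inner_right B yk1 (vk1 - vstar)).symm
  have e2 : ⟪B xstar, vk1 - vstar⟫ = ⟪xstar, Bt (vk1 - vstar)⟫ :=
    (ContinuousLinearMap.adjoint_inner_right B xstar (vk1 - vstar)).symm
  have e3 : ⟪yk1, Bt (vk1 - vstar)⟫ = ⟪xk1, Bt (vk1 - vstar)⟫
      + γ * ⟪Bt (vk1 - vk), Bt (vk1 - vstar)⟫ := by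
    rw [hy, inner_add_left, real_inner_smul_left]
  have e4 : ⟪xk1, Bt (vk1 - vstar)⟫ - ⟪xstar, Bt (vk1 - vstar)⟫
      = ⟪Bt vk1, xk1 - xstar⟫ - ⟪Bt vstar, xk1 - xstar⟫ := by
    rw [← inner_sub_left, real_inner_comm, ← inner_sub_left]
    rw [hBtdef, map_sub]
  have F3 : γ * ⟪B yk1, vk1 - vstar⟫ - γ * ⟪B xstar, vk1 - vstar⟫
      = γ * ⟪Bt vk1, xk1 - xstar⟫ - γ * ⟪Bt vstar, xk1 - xstar⟫
        + γ ^ 2 * ⟪Bt (vk1 - vk), Bt (vk1 - vstar)⟫ := by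
    rw [e1, e2, e3]
    linear_combination γ * e4
  -- F4, F5, F6 : polarization identities
  have F4 : 2 * ⟪xk - xk1, xk1 - xstar⟫
      = ‖xk - xstar‖ ^ 2 - ‖xk1 - xstar‖ ^ 2 - ‖xk1 - xk‖ ^ 2 := by
    have hp := polar (xk - xstar) (xk1 - xstar)
    rw [show xk - xstar - (xk1 - xstar) = xk - xk1 by abel] at hp
    rw [norm_sub_rev xk xk1] at hp
    exact hp
  have F5 : 2 * ⟪vk1 - vk, vstar - vk1⟫
      = ‖vk - vstar‖ ^ 2 - ‖vk1 - vstar‖ ^ 2 - ‖vk1 - vk‖ ^ 2 := by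
    have hp := polarr (vk - vstar) (vk1 - vstar)
    have hi : ⟪vk1 - vk, vstar - vk1⟫ = ⟪vk - vstar - (vk1 - vstar), vk1 - vstar⟫ := by
      rw [show vk1 - vk = -(vk - vstar - (vk1 - vstar)) by abel,
        show vstar - vk1 = -(vk1 - vstar) by abel, inner_neg_neg]
    have hn : ‖vk1 - vk‖ = ‖vk - vstar - (vk1 - vstar)‖ := by
      rw [show vk - vstar - (vk1 - vstar) = -(vk1 - vk) by abel, norm_neg]
    rw [hi, hn]
    exact hp
  have F5' : (γ ^ 2 / lam) * ⟪vk1 - vk, vstar - vk1⟫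
      = (1/2) * (γ ^ 2 / lam) * ‖vk - vstar‖ ^ 2 - (1/2) * (γ ^ 2 / lam) * ‖vk1 - vstar‖ ^ 2
        - (1/2) * (γ ^ 2 / lam) * ‖vk1 - vk‖ ^ 2 := by
    linear_combination ((1/2) * (γ ^ 2 / lam)) * F5
  have F6 : 2 * ⟪Bt (vk1 - vk), Bt (vk1 - vstar)⟫
      = ‖Bt (vk1 - vk)‖ ^ 2 + ‖Bt (vk1 - vstar)‖ ^ 2 - ‖Bt (vk - vstar)‖ ^ 2 := by
    have h1 := norm_sub_sq_real (Bt (vk1 - vstar)) (Bt (vk1 - vk))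
    have h2 : Bt (vk1 - vstar) - Bt (vk1 - vk) = Bt (vk - vstar) := by
      rw [hBtdef, ← map_sub]
      congr 1
      abel
    rw [h2] at h1
    have h3 := real_inner_comm (Bt (vk1 - vstar)) (Bt (vk1 - vk))
    linarith
  have F6' : γ ^ 2 * ⟪Bt (vk1 - vk), Bt (vk1 - vstar)⟫
      = (1/2) * γ ^ 2 * ‖Bt (vk1 - vk)‖ ^ 2 + (1/2) * γ ^ 2 * ‖Bt (vk1 - vstar)‖ ^ 2
        - (1/2) * γ ^ 2 * ‖Bt (vk - vstar)‖ ^ 2 := by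
    linear_combination ((1/2) * γ ^ 2) * F6
  -- F7 : error term
  have hb : xbar - xstar = (xk1 - xstar) + γ • e := by
    rw [hxbar, hxk1, he]; module
  have F7 : 2 * γ * ⟪e, xbar - xstar⟫ = 2 * γ * ⟪e, xk1 - xstar⟫ + 2 * γ ^ 2 * ‖e‖ ^ 2 := by
    have hh : ⟪e, xbar - xstar⟫ = ⟪e, xk1 - xstar⟫ + γ * ‖e‖ ^ 2 := by
      rw [hb, inner_add_right, real_inner_smul_right, real_inner_self_eq_norm_sq]
    linear_combination (2 * γ) * hh
  -- F8, F9 : slack terms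
  have F8 : (γ / β) * ‖xk1 - xk‖ ^ 2 ≤ ‖xk1 - xk‖ ^ 2 := by
    have := mul_le_mul_of_nonneg_right ((div_le_one hβ).mpr hγβ) (sq_nonneg ‖xk1 - xk‖)
    linarith
  have F9 : γ ^ 2 * ‖Bt (vk1 - vk)‖ ^ 2 ≤ (γ ^ 2 / lam) * ‖vk1 - vk‖ ^ 2 := by
    have h1 := mul_le_mul_of_nonneg_left (hρmax (vk1 - vk)) (le_of_lt hpos)
    have h3 : (γ ^ 2 / lam) * (lam * ‖Bt (vk1 - vk)‖ ^ 2)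
        = γ ^ 2 * ‖Bt (vk1 - vk)‖ ^ 2 := by
      field_simp
    linarith
  -- rewrite the goal
  have hG : ∀ X Y : ℝ, 2 * γ * ((γ / (2 * lam)) * (X - lam * Y))
      = (γ ^ 2 / lam) * X - γ ^ 2 * Y := by
    intro X Y
    field_simp
  rw [hG, hG, F7]
  linarith [F1, F2, F3, F4, F5', F6', F8, F9]
end

section
/- Let f : ℝ^d → ℝ be convex and differentiable with (1/β)-Lipschitz continuous gradient, B an r×d real matrix, h : ℝ^r → ℝ ∪ {+∞} proper convex lower semicontinuous, 0 < γ ≤ β, and 0 < λ ≤ 1/ρ_max(BBᵀ); set G = (γ/(2λ))(I − λBBᵀ) and ‖v‖_G² = ⟨v, Gv⟩. Suppose (x*, v*) satisfies ∇f(x*) + Bᵀv* = 0 and h(v) − h(v*) − ⟨Bx*, v − v*⟩ ≥ 0 for all v ∈ ℝ^r. Starting from any x_0 ∈ ℝ^d, v_0 ∈ ℝ^r, generate the deterministic PDFP iterates: for k ≥ 0, y_{k+1} = x_k − γ∇f(x_k) − γBᵀv_k, v_{k+1} = the unique minimizer over v of (λ/γ)h(v) + ½‖v − ((λ/γ)B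 y_{k+1} + v_k)‖², x_{k+1} = x_k − γ∇f(x_k) − γBᵀv_{k+1}. Then for every K ≥ 1, with x̄_K = (1/K)Σ_{k=1}^K x_k and v̄_K = (1/K)Σ_{k=1}^K v_k, R(x̄_K, v̄_K) ≤ (‖x_0 − x*‖² + 2γ‖v_0 − v*‖_G²)/(2γK), where R(x, v) = f(x) − f(x*) − ⟨∇f(x*), x − x*⟩ + h(v) − h(v*) − ⟨Bx*, v − v*⟩. In particular the ergodic convergence rate of PDFP is O(1/K). -/
open scoped RealInnerProductSpace

section Aux
variable {E : Type*} [NormedAddCommGroup E] [InnerProductSpace ℝ E] [CompleteSpace E]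
set_option linter.unusedSectionVars false

lemma inner_id (a b c : E) :
    2 * ⟪a - b, b - c⟫ = ‖a - c‖ ^ 2 - ‖b - c‖ ^ 2 - ‖a - b‖ ^ 2 := by
  have hnorm := norm_add_sq_real (a - b) (b - c)
  have he : (a - b) + (b - c) = a - c := by abel
  rw [he] at hnorm; linarith

lemma inner_id2 (p q : E) : 2 * ⟪p, q⟫ = ‖p‖ ^ 2 + ‖q‖ ^ 2 - ‖p - q‖ ^ 2 := by
  have := norm_sub_sq_real p q
  linarith

lemma line_hasDerivAt_s8 {f : E → ℝ} {f' : E → E}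
    (hgrad : ∀ z, HasGradientAt f (f' z) z) (a u : E) (t : ℝ) :
    HasDerivAt (fun s : ℝ => f (a + s • u)) ⟪f' (a + t • u), u⟫ t := by
  have h1 : HasDerivAt (fun s : ℝ => a + s • u) u t := by
    simpa using ((hasDerivAt_id t).smul_const u).const_add a
  have h2 := (hasGradientAt_iff_hasFDerivAt.mp (hgrad (a + t • u))).comp_hasDerivAt t h1
  exact h2

lemma convex_grad_ineq {f : E → ℝ} {f' : E → E}
    (hconv : ConvexOn ℝ Set.univ f) (hgrad : ∀ z, HasGradientAt f (f' z) z)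
    (a b : E) : f a + ⟪f' a, b - a⟫ ≤ f b := by
  set u := b - a with hu
  have hd : HasDerivAt (fun s : ℝ => f (a + s • u)) ⟪f' a, u⟫ 0 := by
    simpa using line_hasDerivAt_s8 hgrad a u 0
  have hslope := hasDerivAt_iff_tendsto_slope.mp hd
  have hslope' : Filter.Tendsto (slope (fun s : ℝ => f (a + s • u)) 0) (nhdsWithin 0 (Set.Ioi 0))
      (nhds ⟪f' a, u⟫) :=
    hslope.mono_left (nhdsWithin_mono 0 (fun x hx => ne_of_gt hx))
  have hev : ∀ᶠ t in nhdsWithin (0:ℝ) (Set.Ioi 0),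
      slope (fun s : ℝ => f (a + s • u)) 0 t ≤ f b - f a := by
    filter_upwards [Ioc_mem_nhdsGT_of_mem (Set.mem_Ico.mpr ⟨le_refl (0:ℝ), one_pos⟩)] with t ht
    have ht0 := ht.1
    have hcomb : f (a + t • u) ≤ (1 - t) * f a + t * f b := by
      have heq : (1 - t) • a + t • b = a + t • u := by
        rw [hu]; rw [sub_smul, one_smul, smul_sub]; abel
      have := hconv.2 (Set.mem_univ a) (Set.mem_univ b) (by linarith [ht.2] : (0:ℝ) ≤ 1 - t)
        (le_of_lt ht0) (by ring)
      rwa [heq] at this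
    rw [slope_def_field]
    simp only [zero_smul, add_zero, sub_zero]
    rw [div_le_iff₀ ht0]
    nlinarith [hcomb]
  have := le_of_tendsto hslope' hev
  linarith

lemma descent_lemma_s8 {f : E → ℝ} {f' : E → E}
    (hgrad : ∀ z, HasGradientAt f (f' z) z) {L : ℝ}
    (hLip : ∀ p q, ‖f' p - f' q‖ ≤ L * ‖p - q‖) (a b : E) :
    f b ≤ f a + ⟪f' a, b - a⟫ + L / 2 * ‖b - a‖ ^ 2 := by
  set u := b - a with hu
  set ψ : ℝ → ℝ := fun t => f (a + t • u) - t * ⟪f' a, u⟫ - L * ‖u‖ ^ 2 / 2 * t ^ 2 with hψdef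
  have hψ : ∀ t : ℝ, HasDerivAt ψ (⟪f' (a + t • u), u⟫ - ⟪f' a, u⟫ - L * ‖u‖ ^ 2 * t) t := by
    intro t
    have h1 := line_hasDerivAt_s8 hgrad a u t
    have h2 : HasDerivAt (fun t : ℝ => t * ⟪f' a, u⟫) ⟪f' a, u⟫ t := hasDerivAt_mul_const _
    have h3 : HasDerivAt (fun t : ℝ => L * ‖u‖ ^ 2 / 2 * t ^ 2) (L * ‖u‖ ^ 2 / 2 * (2 * t)) t := by
      simpa using (hasDerivAt_pow 2 t).const_mul (L * ‖u‖ ^ 2 / 2)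
    have := (h1.sub h2).sub h3
    convert this using 1
    · rfl
    · rfl
    · rfl
    · ring
  have hanti : AntitoneOn ψ (Set.Icc 0 1) := by
    apply antitoneOn_of_deriv_nonpos (convex_Icc 0 1)
    · exact (fun t _ => (hψ t).differentiableAt.continuousAt.continuousWithinAt)
    · exact fun t _ => (hψ t).differentiableAt.differentiableWithinAt
    · intro t ht
      rw [interior_Icc] at ht
      rw [(hψ t).deriv]
      have hb1 : ⟪f' (a + t • u) - f' a, u⟫ ≤ ‖f' (a + t • u) - f' a‖ * ‖u‖ :=
        real_inner_le_norm _ _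
      have hb2 : ‖f' (a + t • u) - f' a‖ ≤ L * (t * ‖u‖) := by
        have := hLip (a + t • u) a
        simpa [norm_smul, abs_of_pos ht.1] using this
      have hsplit : ⟪f' (a + t • u), u⟫ - ⟪f' a, u⟫ = ⟪f' (a + t • u) - f' a, u⟫ := by
        rw [inner_sub_left]
      have hun : 0 ≤ ‖u‖ := norm_nonneg u
      nlinarith [mul_le_mul_of_nonneg_right hb2 hun]
  have h01 := hanti (Set.mem_Icc.mpr ⟨le_refl 0, zero_le_one⟩)
    (Set.mem_Icc.mpr ⟨zero_le_one, le_refl 1⟩) zero_le_one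
  have hψ0 : ψ 0 = f a := by simp [hψdef]
  have hψ1 : ψ 1 = f b - ⟪f' a, u⟫ - L * ‖u‖ ^ 2 / 2 := by
    have : a + u = b := by rw [hu]; abel
    simp [hψdef, this]
  rw [hψ0, hψ1] at h01
  linarith

lemma prox_vi {S : Set E} {h : E → ℝ} (hh : ConvexOn ℝ S h) {c : ℝ} (hc : 0 < c)
    {z w : E} (hz : z ∈ S)
    (hmin : ∀ u ∈ S, c * h z + (1/2) * ‖z - w‖ ^ 2 ≤ c * h u + (1/2) * ‖u - w‖ ^ 2)
    {u : E} (hu : u ∈ S) :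
    0 ≤ c * (h u - h z) + ⟪z - w, u - z⟫ := by
  set C := c * (h u - h z) + ⟪z - w, u - z⟫ with hC
  set D := ‖u - z‖ ^ 2 with hD
  have hD0 : 0 ≤ D := by positivity
  have key : ∀ t : ℝ, t ∈ Set.Ioc (0:ℝ) 1 → 0 ≤ C + t / 2 * D := by
    intro t ht
    have hmem : (1 - t) • z + t • u ∈ S :=
      hh.1 hz hu (by linarith [ht.2]) (le_of_lt ht.1) (by ring)
    have heq : (1 - t) • z + t • u = z + t • (u - z) := by
      rw [sub_smul, one_smul, smul_sub]; abel
    have h1 := hmin _ hmem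
    have h2 : h ((1 - t) • z + t • u) ≤ (1 - t) * h z + t * h u :=
      hh.2 hz hu (by linarith [ht.2]) (le_of_lt ht.1) (by ring)
    have hnorm : ‖(1 - t) • z + t • u - w‖ ^ 2
        = ‖z - w‖ ^ 2 + 2 * (t * ⟪z - w, u - z⟫) + t ^ 2 * ‖u - z‖ ^ 2 := by
      rw [heq]
      have he2 : z + t • (u - z) - w = (z - w) + t • (u - z) := by abel
      rw [he2, norm_add_sq_real, real_inner_smul_right, norm_smul, Real.norm_eq_abs,
        abs_of_pos ht.1]
      ring
    have hmul : 0 ≤ c * t * (h u - h z) + t * ⟪z - w, u - z⟫ + t ^ 2 / 2 * D := by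
      nlinarith [h1, h2, hnorm, mul_le_mul_of_nonneg_left h2 (le_of_lt hc)]
    have ht0 := ht.1
    rw [hC, hD]
    have := div_nonneg hmul (le_of_lt ht0)
    calc (0:ℝ) ≤ (c * t * (h u - h z) + t * ⟪z - w, u - z⟫ + t ^ 2 / 2 * D) / t := this
      _ = c * (h u - h z) + ⟪z - w, u - z⟫ + t / 2 * D := by field_simp
  by_contra hneg
  push_neg at hneg
  rcases eq_or_lt_of_le hD0 with hD0' | hDpos
  · have := key 1 (Set.mem_Ioc.mpr ⟨one_pos, le_refl 1⟩)
    rw [← hD0'] at this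
    simp at this
    linarith
  · set t0 := min 1 (-C / D) with ht0def
    have ht0pos : 0 < t0 := lt_min one_pos (div_pos (by linarith) hDpos)
    have ht0le : t0 ≤ 1 := min_le_left _ _
    have h3 := key t0 (Set.mem_Ioc.mpr ⟨ht0pos, ht0le⟩)
    have h4 : t0 ≤ -C / D := min_le_right _ _
    have h5 : t0 * D ≤ -C := by
      rw [div_eq_mul_inv] at h4
      calc t0 * D ≤ (-C * D⁻¹) * D := mul_le_mul_of_nonneg_right h4 hD0
        _ = -C := by field_simp
    linarith

end Aux

set_option maxHeartbeats 2000000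

/-- ergodic `O(1/K)` rate of the deterministic PDFP iteration.
For the iterates `y_{k+1} = x_k − γ∇f(x_k) − γBᵀv_k`,
`v_{k+1} = Prox_{(λ/γ)h}((λ/γ)B y_{k+1} + v_k)`,
`x_{k+1} = x_k − γ∇f(x_k) − γBᵀv_{k+1}` and the ergodic averages
`x̄_K = (1/K)Σ_{k=1}^K x_k`, `v̄_K = (1/K)Σ_{k=1}^K v_k`, one has
`R(x̄_K, v̄_K) ≤ (‖x_0 − x*‖² + 2γ‖v_0 − v*‖_G²)/(2γK)`.
Here `h` (the conjugate `g*`) is modelled by a real-valued function on its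
effective domain `S` and the prox is the (unique) minimizer over `S`;
`λ ≤ 1/ρ_max(BBᵀ)` is expressed as `λ‖Bᵀu‖² ≤ ‖u‖²`, and
`‖u‖_G² = (γ/(2λ))(‖u‖² − λ‖Bᵀu‖²)` for `G = (γ/(2λ))(I − λBBᵀ)`. -/
theorem stmt_8 {d r : ℕ}
    (f : EuclideanSpace ℝ (Fin d) → ℝ)
    (f' : EuclideanSpace ℝ (Fin d) → EuclideanSpace ℝ (Fin d))
    (hconv : ConvexOn ℝ Set.univ f)
    (hgrad : ∀ x, HasGradientAt f (f' x) x)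
    (β : ℝ)
    (hLip : ∀ x y, ‖f' x - f' y‖ ≤ (1 / β) * ‖x - y‖)
    (B : EuclideanSpace ℝ (Fin d) →L[ℝ] EuclideanSpace ℝ (Fin r))
    (S : Set (EuclideanSpace ℝ (Fin r)))
    (h : EuclideanSpace ℝ (Fin r) → ℝ)
    (hS : S.Nonempty) (hhconv : ConvexOn ℝ S h)
    (hlsc : LowerSemicontinuousOn h S)
    (γ lam : ℝ) (hγ0 : 0 < γ) (hγβ : γ ≤ β) (hlam0 : 0 < lam)
    (hρmax : ∀ u : EuclideanSpace ℝ (Fin r),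
      lam * ‖ContinuousLinearMap.adjoint B u‖ ^ 2 ≤ ‖u‖ ^ 2)
    (xstar : EuclideanSpace ℝ (Fin d)) (vstar : EuclideanSpace ℝ (Fin r))
    (hvstar : vstar ∈ S)
    (hopt1 : f' xstar + ContinuousLinearMap.adjoint B vstar = 0)
    (hopt2 : ∀ v ∈ S, h v - h vstar - ⟪B xstar, v - vstar⟫ ≥ 0)
    (x y : ℕ → EuclideanSpace ℝ (Fin d)) (v : ℕ → EuclideanSpace ℝ (Fin r))
    (hy : ∀ k : ℕ,
      y (k + 1) = x k - γ • f' (x k) - γ • ContinuousLinearMap.adjoint B (v k))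
    (hvmem : ∀ k : ℕ, v (k + 1) ∈ S)
    (hvmin : ∀ k : ℕ, ∀ u ∈ S,
      (lam / γ) * h (v (k + 1))
          + (1 / 2) * ‖v (k + 1) - ((lam / γ) • B (y (k + 1)) + v k)‖ ^ 2
        ≤ (lam / γ) * h u + (1 / 2) * ‖u - ((lam / γ) • B (y (k + 1)) + v k)‖ ^ 2)
    (hx : ∀ k : ℕ,
      x (k + 1) = x k - γ • f' (x k) - γ • ContinuousLinearMap.adjoint B (v (k + 1))) :
    ∀ K : ℕ, 1 ≤ K →
      ((f ((K : ℝ)⁻¹ • ∑ k ∈ Finset.range K, x (k + 1)) - f xstar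
          - ⟪f' xstar, ((K : ℝ)⁻¹ • ∑ k ∈ Finset.range K, x (k + 1)) - xstar⟫)
        + (h ((K : ℝ)⁻¹ • ∑ k ∈ Finset.range K, v (k + 1)) - h vstar
          - ⟪B xstar, ((K : ℝ)⁻¹ • ∑ k ∈ Finset.range K, v (k + 1)) - vstar⟫))
      ≤ (‖x 0 - xstar‖ ^ 2
          + 2 * γ * ((γ / (2 * lam)) * (‖v 0 - vstar‖ ^ 2
              - lam * ‖ContinuousLinearMap.adjoint B (v 0 - vstar)‖ ^ 2)))
        / (2 * γ * K) := by
  intro K hK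
  have hβ : (0:ℝ) < β := lt_of_lt_of_le hγ0 hγβ
  have hγne : γ ≠ 0 := ne_of_gt hγ0
  have hlamne : lam ≠ 0 := ne_of_gt hlam0
  set R : ℕ → ℝ := fun k =>
    (f (x (k+1)) - f xstar - ⟪f' xstar, x (k+1) - xstar⟫)
      + (h (v (k+1)) - h vstar - ⟪B xstar, v (k+1) - vstar⟫) with hRdef
  set Φ : ℕ → ℝ := fun k =>
    1/(2*γ) * ‖x k - xstar‖^2
      + γ/(2*lam) * (‖v k - vstar‖^2
          - lam * ‖ContinuousLinearMap.adjoint B (v k - vstar)‖^2) with hΦdef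
  have hstep : ∀ k : ℕ, R k ≤ Φ k - Φ (k+1) := by
    intro k
    -- scalar abbreviations
    set I1 : ℝ := ⟪x k - x (k+1), x (k+1) - xstar⟫ with hI1def
    set I2 : ℝ := ⟪v (k+1) - vstar, B (x (k+1)) - B xstar⟫ with hI2def
    set I3 : ℝ := ⟪vstar, B (x (k+1)) - B xstar⟫ with hI3def
    -- f part
    have hf1 : f (x (k+1)) ≤ f (x k) + ⟪f' (x k), x (k+1) - x k⟫
        + (1/β) / 2 * ‖x (k+1) - x k‖^2 := descent_lemma_s8 hgrad hLip (x k) (x (k+1))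
    have hf2 : f (x k) + ⟪f' (x k), xstar - x k⟫ ≤ f xstar :=
      convex_grad_ineq hconv hgrad (x k) xstar
    have hsplitI : I2 = ⟪v (k+1), B (x (k+1)) - B xstar⟫ - I3 := by
      rw [hI2def, hI3def, inner_sub_left]
    have h1 : γ • f' (x k)
        = (x k - x (k+1)) - γ • (ContinuousLinearMap.adjoint B (v (k+1))) := by
      rw [hx k]; abel
    have h1' : γ * ⟪f' (x k), x (k+1) - xstar⟫ = I1 - γ * (I2 + I3) := by
      calc γ * ⟪f' (x k), x (k+1) - xstar⟫
          = ⟪γ • f' (x k), x (k+1) - xstar⟫ := (real_inner_smul_left _ _ _).symm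
        _ = ⟪(x k - x (k+1)) - γ • (ContinuousLinearMap.adjoint B (v (k+1))),
              x (k+1) - xstar⟫ := by rw [h1]
        _ = I1 - γ * ⟪ContinuousLinearMap.adjoint B (v (k+1)), x (k+1) - xstar⟫ := by
              rw [inner_sub_left, real_inner_smul_left, hI1def]
        _ = I1 - γ * (I2 + I3) := by
              rw [ContinuousLinearMap.adjoint_inner_left, map_sub]
              rw [hsplitI]; ring
    have hip : ⟪f' (x k), x (k+1) - xstar⟫ = (1/γ) * (I1 - γ * (I2 + I3)) := by
      rw [← h1']; field_simp
    have hid1 : 2 * I1 = ‖x k - xstar‖^2 - ‖x (k+1) - xstar‖^2 - ‖x k - x (k+1)‖^2 :=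
      inner_id _ _ _
    have hstar : ⟪f' xstar, x (k+1) - xstar⟫ = -I3 := by
      have hfs : f' xstar = -(ContinuousLinearMap.adjoint B vstar) :=
        eq_neg_of_add_eq_zero_left hopt1
      rw [hfs, inner_neg_left, ContinuousLinearMap.adjoint_inner_left, map_sub, hI3def]
    have hadd : ⟪f' (x k), x (k+1) - x k⟫ + ⟪f' (x k), xstar - x k⟫
        = ⟪f' (x k), x (k+1) - xstar⟫ + 2 * ⟪f' (x k), xstar - x k⟫ := by
      have : ⟪f' (x k), x (k+1) - x k⟫
          = ⟪f' (x k), x (k+1) - xstar⟫ + ⟪f' (x k), xstar - x k⟫ := by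
        rw [← inner_add_right]; congr 1; abel
      linarith
    have hβ2 : (1/β)/2 * ‖x (k+1) - x k‖^2 ≤ 1/(2*γ) * ‖x (k+1) - x k‖^2 := by
      apply mul_le_mul_of_nonneg_right _ (by positivity)
      rw [div_div, one_div, one_div]
      exact inv_anti₀ (by positivity) (by linarith)
    have hnsub : ‖x (k+1) - x k‖^2 = ‖x k - x (k+1)‖^2 := by rw [norm_sub_rev]
    have hip2 : (1/γ) * (I1 - γ*(I2 + I3))
        = 1/(2*γ) * (‖x k - xstar‖^2 - ‖x (k+1) - xstar‖^2 - ‖x k - x (k+1)‖^2)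
          - (I2 + I3) := by
      have hI1' : I1 = (‖x k - xstar‖^2 - ‖x (k+1) - xstar‖^2 - ‖x k - x (k+1)‖^2)/2 := by
        linarith
      rw [hI1']; field_simp
    have hF : f (x (k+1)) - f xstar - ⟪f' xstar, x (k+1) - xstar⟫
        ≤ 1/(2*γ) * (‖x k - xstar‖^2 - ‖x (k+1) - xstar‖^2) - I2 := by
      have hcombine : f (x (k+1)) - f xstar
          ≤ ⟪f' (x k), x (k+1) - xstar⟫ + 1/(2*γ) * ‖x k - x (k+1)‖^2 := by
        have h3 : ⟪f' (x k), x (k+1) - x k⟫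
            = ⟪f' (x k), x (k+1) - xstar⟫ + ⟪f' (x k), xstar - x k⟫ := by
          rw [← inner_add_right]; congr 1; abel
        rw [hnsub] at hf1 hβ2
        linarith [hf1, hf2, hβ2, h3]
      rw [hip, hip2] at hcombine
      linarith [hstar]
    -- h part
    set K1 : ℝ := ⟪v (k+1) - v k, vstar - v (k+1)⟫ with hK1def
    set K2 : ℝ := ⟪B (y (k+1)), vstar - v (k+1)⟫ with hK2def
    set K3 : ℝ := ⟪ContinuousLinearMap.adjoint B (v (k+1) - v k),
      ContinuousLinearMap.adjoint B (v (k+1) - vstar)⟫ with hK3def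
    have hvi := prox_vi hhconv (div_pos hlam0 hγ0) (hvmem k) (hvmin k) hvstar
    have hw : ⟪v (k+1) - ((lam/γ) • B (y (k+1)) + v k), vstar - v (k+1)⟫
        = K1 - (lam/γ) * K2 := by
      have he : v (k+1) - ((lam/γ) • B (y (k+1)) + v k)
          = (v (k+1) - v k) - (lam/γ) • B (y (k+1)) := by abel
      rw [he, inner_sub_left, real_inner_smul_left, hK1def, hK2def]
    have hH2 : h (v (k+1)) - h vstar ≤ (γ/lam) * K1 - K2 := by
      have hc : (0:ℝ) < lam/γ := div_pos hlam0 hγ0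
      have h5 : (lam/γ) * (h (v (k+1)) - h vstar) ≤ (lam/γ) * ((γ/lam) * K1 - K2) := by
        rw [hw] at hvi
        have hexp : (lam/γ) * ((γ/lam) * K1 - K2) = K1 - (lam/γ) * K2 := by
          field_simp
        rw [hexp]
        nlinarith [hvi]
      exact (mul_le_mul_iff_right₀ hc).mp h5
    have hyx : y (k+1) = x (k+1)
        + γ • (ContinuousLinearMap.adjoint B (v (k+1) - v k)) := by
      rw [hy k, hx k, map_sub, smul_sub]; abel
    have hK2eq : K2 = ⟪B (x (k+1)), vstar - v (k+1)⟫ - γ * K3 := by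
      rw [hK2def, hyx, map_add, map_smul, inner_add_left, inner_smul_left]
      have hadj : ⟪B (ContinuousLinearMap.adjoint B (v (k+1) - v k)), vstar - v (k+1)⟫
          = ⟪ContinuousLinearMap.adjoint B (v (k+1) - v k),
              ContinuousLinearMap.adjoint B (vstar - v (k+1))⟫ :=
        (ContinuousLinearMap.adjoint_inner_right _ _ _).symm
      have hneg : ContinuousLinearMap.adjoint B (vstar - v (k+1))
          = -(ContinuousLinearMap.adjoint B (v (k+1) - vstar)) := by
        rw [← map_neg]; congr 1; abel
      rw [hadj, hneg, inner_neg_right, hK3def]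
      simp; ring
    have hI2' : ⟪B xstar, vstar - v (k+1)⟫ - ⟪B (x (k+1)), vstar - v (k+1)⟫ = I2 := by
      rw [← inner_sub_left, hI2def]
      rw [show B xstar - B (x (k+1)) = -(B (x (k+1)) - B xstar) from by abel,
        show vstar - v (k+1) = -(v (k+1) - vstar) from by abel, inner_neg_neg,
        real_inner_comm]
    have hBxs : ⟪B xstar, v (k+1) - vstar⟫ = -⟪B xstar, vstar - v (k+1)⟫ := by
      rw [show v (k+1) - vstar = -(vstar - v (k+1)) from by abel, inner_neg_right]
    have hH : h (v (k+1)) - h vstar - ⟪B xstar, v (k+1) - vstar⟫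
        ≤ I2 + γ * K3 + (γ/lam) * K1 := by
      linarith [hH2, hK2eq, hI2', hBxs]
    -- V part
    have hvv1 : 2 * K3 = ‖ContinuousLinearMap.adjoint B (v (k+1) - v k)‖^2
        + ‖ContinuousLinearMap.adjoint B (v (k+1) - vstar)‖^2
        - ‖ContinuousLinearMap.adjoint B (v k - vstar)‖^2 := by
      have hthis := inner_id2 (ContinuousLinearMap.adjoint B (v (k+1) - v k))
        (ContinuousLinearMap.adjoint B (v (k+1) - vstar))
      have hdiff : ContinuousLinearMap.adjoint B (v (k+1) - v k)
          - ContinuousLinearMap.adjoint B (v (k+1) - vstar)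
          = -(ContinuousLinearMap.adjoint B (v k - vstar)) := by
        rw [← map_sub, ← map_neg]; congr 1; abel
      rw [hdiff, norm_neg, ← hK3def] at hthis
      exact hthis
    have hK1eq : K1 = ⟪v k - v (k+1), v (k+1) - vstar⟫ := by
      rw [hK1def, show v (k+1) - v k = -(v k - v (k+1)) from by abel,
        show vstar - v (k+1) = -(v (k+1) - vstar) from by abel, inner_neg_neg]
    have hvv2 : 2 * K1 = ‖v k - vstar‖^2 - ‖v (k+1) - vstar‖^2
        - ‖v k - v (k+1)‖^2 := by
      rw [hK1eq]; exact inner_id _ _ _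
    have hρ := hρmax (v (k+1) - v k)
    have hnr : ‖v (k+1) - v k‖^2 = ‖v k - v (k+1)‖^2 := by rw [norm_sub_rev]
    have hslack : 0 ≤ ‖v k - v (k+1)‖^2
        - lam * ‖ContinuousLinearMap.adjoint B (v (k+1) - v k)‖^2 := by
      linarith [hρ, hnr]
    have hV : γ * K3 + (γ/lam) * K1
        ≤ γ/(2*lam) * (‖v k - vstar‖^2
              - lam * ‖ContinuousLinearMap.adjoint B (v k - vstar)‖^2)
          - γ/(2*lam) * (‖v (k+1) - vstar‖^2
              - lam * ‖ContinuousLinearMap.adjoint B (v (k+1) - vstar)‖^2) := by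
      have hK3' : K3 = (‖ContinuousLinearMap.adjoint B (v (k+1) - v k)‖^2
          + ‖ContinuousLinearMap.adjoint B (v (k+1) - vstar)‖^2
          - ‖ContinuousLinearMap.adjoint B (v k - vstar)‖^2)/2 := by linarith [hvv1]
      have hK1' : K1 = (‖v k - vstar‖^2 - ‖v (k+1) - vstar‖^2
          - ‖v k - v (k+1)‖^2)/2 := by linarith [hvv2]
      have heq : γ/(2*lam) * (‖v k - vstar‖^2
              - lam * ‖ContinuousLinearMap.adjoint B (v k - vstar)‖^2)
          - γ/(2*lam) * (‖v (k+1) - vstar‖^2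
              - lam * ‖ContinuousLinearMap.adjoint B (v (k+1) - vstar)‖^2)
          - (γ * K3 + (γ/lam) * K1)
          = γ/(2*lam) * (‖v k - v (k+1)‖^2
              - lam * ‖ContinuousLinearMap.adjoint B (v (k+1) - v k)‖^2) := by
        rw [hK3', hK1']; field_simp; ring
      have hpos : 0 ≤ γ/(2*lam) * (‖v k - v (k+1)‖^2
          - lam * ‖ContinuousLinearMap.adjoint B (v (k+1) - v k)‖^2) :=
        mul_nonneg (by positivity) hslack
      linarith [heq, hpos]
    -- assemble one step
    simp only [hRdef, hΦdef]
    linarith [hF, hH, hV]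
  -- telescoping sum
  have hsum : ∑ k ∈ Finset.range K, R k ≤ Φ 0 - Φ K := by
    calc ∑ k ∈ Finset.range K, R k ≤ ∑ k ∈ Finset.range K, (Φ k - Φ (k+1)) :=
          Finset.sum_le_sum (fun k _ => hstep k)
      _ = Φ 0 - Φ K := Finset.sum_range_sub' Φ K
  have hΦK : 0 ≤ Φ K := by
    simp only [hΦdef]
    have := hρmax (v K - vstar)
    have h1 : (0:ℝ) ≤ 1/(2*γ) * ‖x K - xstar‖^2 := by positivity
    have h2 : (0:ℝ) ≤ γ/(2*lam) * (‖v K - vstar‖^2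
        - lam * ‖ContinuousLinearMap.adjoint B (v K - vstar)‖^2) :=
      mul_nonneg (by positivity) (by linarith)
    linarith
  have hsum0 : ∑ k ∈ Finset.range K, R k ≤ Φ 0 := by linarith
  -- Jensen / averaging
  have hKpos : (0:ℝ) < (K:ℝ) := by exact_mod_cast Nat.pos_of_ne_zero (by omega)
  have hKne : (K:ℝ) ≠ 0 := ne_of_gt hKpos
  have hwsum : ∑ _k ∈ Finset.range K, (K:ℝ)⁻¹ = 1 := by
    rw [Finset.sum_const, Finset.card_range, nsmul_eq_mul, mul_inv_cancel₀ hKne]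
  have hfJ : f ((K:ℝ)⁻¹ • ∑ k ∈ Finset.range K, x (k+1))
      ≤ (K:ℝ)⁻¹ * ∑ k ∈ Finset.range K, f (x (k+1)) := by
    rw [Finset.smul_sum, Finset.mul_sum]
    exact hconv.map_sum_le (fun i _ => by positivity) hwsum (fun i _ => Set.mem_univ _)
  have hhJ : h ((K:ℝ)⁻¹ • ∑ k ∈ Finset.range K, v (k+1))
      ≤ (K:ℝ)⁻¹ * ∑ k ∈ Finset.range K, h (v (k+1)) := by
    rw [Finset.smul_sum, Finset.mul_sum]
    exact hhconv.map_sum_le (fun i _ => by positivity) hwsum (fun i _ => hvmem i)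
  have hlin1 : ⟪f' xstar, ((K:ℝ)⁻¹ • ∑ k ∈ Finset.range K, x (k+1)) - xstar⟫
      = (K:ℝ)⁻¹ * ∑ k ∈ Finset.range K, ⟪f' xstar, x (k+1) - xstar⟫ := by
    rw [inner_sub_right, real_inner_smul_right, inner_sum]
    simp only [inner_sub_right, Finset.sum_sub_distrib, Finset.sum_const,
      Finset.card_range, nsmul_eq_mul]
    field_simp
  have hlin2 : ⟪B xstar, ((K:ℝ)⁻¹ • ∑ k ∈ Finset.range K, v (k+1)) - vstar⟫
      = (K:ℝ)⁻¹ * ∑ k ∈ Finset.range K, ⟪B xstar, v (k+1) - vstar⟫ := by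
    rw [inner_sub_right, real_inner_smul_right, inner_sum]
    simp only [inner_sub_right, Finset.sum_sub_distrib, Finset.sum_const,
      Finset.card_range, nsmul_eq_mul]
    field_simp
  have hsplit : ∑ k ∈ Finset.range K, R k
      = (∑ k ∈ Finset.range K, f (x (k+1))) - K * f xstar
        - (∑ k ∈ Finset.range K, ⟪f' xstar, x (k+1) - xstar⟫)
        + ((∑ k ∈ Finset.range K, h (v (k+1))) - K * h vstar
        - (∑ k ∈ Finset.range K, ⟪B xstar, v (k+1) - vstar⟫)) := by
    simp only [hRdef]
    rw [Finset.sum_add_distrib, Finset.sum_sub_distrib, Finset.sum_sub_distrib,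
      Finset.sum_sub_distrib, Finset.sum_sub_distrib, Finset.sum_const,
      Finset.card_range, nsmul_eq_mul, Finset.sum_const, Finset.card_range,
      nsmul_eq_mul]
  have hRsum : (K:ℝ)⁻¹ * ∑ k ∈ Finset.range K, R k
      = (K:ℝ)⁻¹ * (∑ k ∈ Finset.range K, f (x (k+1))) - f xstar
        - (K:ℝ)⁻¹ * (∑ k ∈ Finset.range K, ⟪f' xstar, x (k+1) - xstar⟫)
        + ((K:ℝ)⁻¹ * (∑ k ∈ Finset.range K, h (v (k+1))) - h vstar
        - (K:ℝ)⁻¹ * (∑ k ∈ Finset.range K, ⟪B xstar, v (k+1) - vstar⟫)) := by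
    rw [hsplit]; field_simp
  have hchain1 : (f ((K:ℝ)⁻¹ • ∑ k ∈ Finset.range K, x (k+1)) - f xstar
        - ⟪f' xstar, ((K:ℝ)⁻¹ • ∑ k ∈ Finset.range K, x (k+1)) - xstar⟫)
      + (h ((K:ℝ)⁻¹ • ∑ k ∈ Finset.range K, v (k+1)) - h vstar
        - ⟪B xstar, ((K:ℝ)⁻¹ • ∑ k ∈ Finset.range K, v (k+1)) - vstar⟫)
      ≤ (K:ℝ)⁻¹ * ∑ k ∈ Finset.range K, R k := by
    rw [hlin1, hlin2, hRsum]
    linarith [hfJ, hhJ]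
  have hchain2 : (K:ℝ)⁻¹ * ∑ k ∈ Finset.range K, R k ≤ (K:ℝ)⁻¹ * Φ 0 :=
    mul_le_mul_of_nonneg_left hsum0 (by positivity)
  have hfinal : (K:ℝ)⁻¹ * Φ 0
      = (‖x 0 - xstar‖ ^ 2
          + 2 * γ * ((γ / (2 * lam)) * (‖v 0 - vstar‖ ^ 2
              - lam * ‖ContinuousLinearMap.adjoint B (v 0 - vstar)‖ ^ 2)))
        / (2 * γ * K) := by
    simp only [hΦdef]
    field_simp
  calc _ ≤ (K:ℝ)⁻¹ * ∑ k ∈ Finset.range K, R k := hchain1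
    _ ≤ (K:ℝ)⁻¹ * Φ 0 := hchain2
    _ = _ := hfinal
end
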